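/- arXiv:2510.11311 — 4 statements merged into one kernel-verified Lean document; each statement's English description precedes it below -/
import Mathlib

section
/- No one-directed complete bipartite graph is avoidable: for every one-directed complete bipartite graph F there is NO function d_F : ℕ → ℕ such that for every k, every digraph with minimum out-degree at least d_F(k) contains an F-free subdigraph of minimum out-degree at least k. -/
/-- A digraph: a set of vertices together with arcs (ordered pairs of
distinct vertices) between them, inside an ambient vertex type `α`. -/
structure Digraph' (α : Type) where
  verts : Set α
  Adj : α → α → Prop
  ne_of_adj : ∀ ⦃u v : α⦄, Adj u v → u ≠ v
  mem_verts_left : ∀ ⦃u v : α⦄, Adj u v → u ∈ verts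
  mem_verts_right : ∀ ⦃u v : α⦄, Adj u v → v ∈ verts

namespace Digraph'

variable {α β : Type}

/-- The out-neighbourhood of a vertex. -/
def outNbrs (D : Digraph' α) (v : α) : Set α := {u | D.Adj v u}

/-- The in-neighbourhood of a vertex. -/
def inNbrs (D : Digraph' α) (v : α) : Set α := {u | D.Adj u v}

/-- The set `s` has at least `k` elements (also meaningful for infinite sets). -/
def AtLeast (s : Set α) (k : ℕ) : Prop := ∃ t : Finset α, ↑t ⊆ s ∧ k ≤ t.card

/-- Every vertex of `D` has out-degree at least `k`, i.e. `δ⁺(D) ≥ k`. -/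
def MinOutDegAtLeast (D : Digraph' α) (k : ℕ) : Prop :=
  ∀ v ∈ D.verts, AtLeast (D.outNbrs v) k

/-- `D'` is a subdigraph of `D`. -/
def IsSubdigraph (D' D : Digraph' α) : Prop :=
  D'.verts ⊆ D.verts ∧ ∀ ⦃u v : α⦄, D'.Adj u v → D.Adj u v

/-- `D` contains a copy of the pattern digraph `F` (a pattern digraph has
vertex set all of its ambient type). -/
def HasCopy (D : Digraph' α) (F : Digraph' β) : Prop :=
  ∃ f : β → α, Function.Injective f ∧ (∀ w : β, f w ∈ D.verts) ∧
    ∀ ⦃u v : β⦄, F.Adj u v → D.Adj (f u) (f v)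

/-- The digraph `F` is avoidable: there is `d_F : ℕ → ℕ` such that every
(nonempty) digraph of minimum out-degree at least `d_F k` contains an
`F`-free subdigraph of minimum out-degree at least `k`. -/
def Avoidable (F : Digraph' β) : Prop :=
  ∃ dF : ℕ → ℕ, ∀ (α : Type) (D : Digraph' α) (k : ℕ), D.verts.Nonempty →
    D.MinOutDegAtLeast (dF k) →
    ∃ D' : Digraph' α, D'.IsSubdigraph D ∧ D'.verts.Nonempty ∧
      D'.MinOutDegAtLeast k ∧ ¬ D'.HasCopy F

end Digraph'

open Digraph'

/-- The one-directed complete bipartite graph with colour classes of sizes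
`a` and `b`, all arcs directed from the first class to the second. -/
def oneDirKbip (a b : ℕ) : Digraph' (Fin a ⊕ Fin b) where
  verts := Set.univ
  Adj u v := (∃ i : Fin a, u = Sum.inl i) ∧ ∃ j : Fin b, v = Sum.inr j
  ne_of_adj := by rintro u v ⟨⟨i, rfl⟩, ⟨j, rfl⟩⟩; simp
  mem_verts_left := fun _ _ _ => Set.mem_univ _
  mem_verts_right := fun _ _ _ => Set.mem_univ _

namespace NotAvoidAux

open Digraph'

/-- Vertex type for the forcing digraph: tree nodes (nonempty lists of
pool indices, built by `cons`) on the left, pool elements on the right. -/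
abbrev V (d : ℕ) : Type := List (Fin d) ⊕ Fin d

/-- Two suffixes of the same list with equal lengths coincide. -/
theorem suffix_eq_of_length {γ : Type} {y y' z : List γ} (h1 : y <:+ z) (h2 : y' <:+ z)
    (hl : y.length = y'.length) : y = y' := by
  obtain ⟨t, rfl⟩ := h1
  obtain ⟨t', h⟩ := h2
  have hlen : t'.length = t.length := by
    have h' := congrArg List.length h
    simp only [List.length_append] at h'
    omega
  exact ((List.append_inj h hlen).2).symm

/-- The forcing digraph: a `d`-ary forest of depth `ℓ` whose level-1 nodes are
the out-neighbourhood of every pool vertex; every internal node points to its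
`d` children; every leaf (depth `ℓ`) points to all `d` pool vertices. -/
def forcer (d ℓ : ℕ) : Digraph' (V d) where
  verts := {v : V d | ∀ x : List (Fin d), v = Sum.inl x → 1 ≤ x.length ∧ x.length ≤ ℓ}
  Adj u v :=
    (∃ (x : List (Fin d)) (c : Fin d),
        u = Sum.inl x ∧ v = Sum.inl (c :: x) ∧ 1 ≤ x.length ∧ x.length < ℓ) ∨
    (∃ (x : List (Fin d)) (q : Fin d),
        u = Sum.inl x ∧ v = Sum.inr q ∧ x.length = ℓ ∧ 1 ≤ ℓ) ∨
    (∃ (p : Fin d) (c : Fin d), u = Sum.inr p ∧ v = Sum.inl [c] ∧ 1 ≤ ℓ)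
  ne_of_adj := by
    rintro u v (⟨x, c, rfl, rfl, h1, h2⟩ | ⟨x, q, rfl, rfl, h1, h2⟩ | ⟨p, c, rfl, rfl, h⟩)
    · intro h
      have := congrArg (fun w => match w with | Sum.inl y => y.length | Sum.inr _ => 0) h
      simp at this
    · simp
    · simp
  mem_verts_left := by
    rintro u v (⟨x, c, rfl, rfl, h1, h2⟩ | ⟨x, q, rfl, rfl, h1, h2⟩ | ⟨p, c, rfl, rfl, h⟩) <;>
      intro x' hx'
    · obtain rfl : x = x' := by injection hx'
      exact ⟨h1, le_of_lt h2⟩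
    · obtain rfl : x = x' := by injection hx'
      omega
    · exact absurd hx' (by simp)
  mem_verts_right := by
    rintro u v (⟨x, c, rfl, rfl, h1, h2⟩ | ⟨x, q, rfl, rfl, h1, h2⟩ | ⟨p, c, rfl, rfl, h⟩) <;>
      intro x' hx'
    · obtain rfl : c :: x = x' := by injection hx'
      simp only [List.length_cons]
      omega
    · exact absurd hx' (by simp)
    · obtain rfl : [c] = x' := by injection hx'
      simp only [List.length_singleton]
      omega

/-- Main combinatorial lemma: any nonempty subdigraph of the forcer with
minimum out-degree at least `a + b` contains a copy of `oneDirKbip a b`,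
provided the depth `ℓ` is large enough. -/
theorem forcer_forces (a b d ℓ : ℕ) (ha : 1 ≤ a) (hb : 1 ≤ b) (hd : 1 ≤ d) (hl : 1 ≤ ℓ)
    (hineq : Nat.choose d b * (a - 1) < (a + b) ^ (ℓ - 1))
    (D' : Digraph' (V d)) (hsub : D'.IsSubdigraph (forcer d ℓ))
    (hne : D'.verts.Nonempty) (hmin : D'.MinOutDegAtLeast (a + b)) :
    D'.HasCopy (oneDirKbip a b) := by
  classical
  set k := a + b with hk
  have hk2 : 2 ≤ k := by omega
  have hT : ∀ v, v ∈ D'.verts → ∃ t : Finset (V d), ↑t ⊆ D'.outNbrs v ∧ k ≤ t.card := hmin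
  choose! T hTsub hTcard using hT
  have hTadj : ∀ v, v ∈ D'.verts → ∀ u ∈ T v, D'.Adj v u := by
    intro v hv u hu
    exact hTsub v hv hu
  have hTvert : ∀ v, v ∈ D'.verts → ∀ u ∈ T v, u ∈ D'.verts := by
    intro v hv u hu
    exact D'.mem_verts_right (hTadj v hv u hu)
  have hTF : ∀ v, v ∈ D'.verts → ∀ u ∈ T v, (forcer d ℓ).Adj v u := by
    intro v hv u hu
    exact hsub.2 (hTadj v hv u hu)
  have hvlen : ∀ x : List (Fin d), Sum.inl x ∈ D'.verts → 1 ≤ x.length ∧ x.length ≤ ℓ := by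
    intro x hx
    exact hsub.1 hx x rfl
  have hTne : ∀ v, v ∈ D'.verts → (T v).Nonempty := by
    intro v hv
    exact Finset.card_pos.mp (lt_of_lt_of_le (by omega) (hTcard v hv))
  -- adjacency inversion
  have inv_lt : ∀ (x : List (Fin d)) (u : V d), (forcer d ℓ).Adj (Sum.inl x) u →
      x.length < ℓ → ∃ c, u = Sum.inl (c :: x) := by
    intro x u h hlt
    rcases h with ⟨x', c, hx', hu, h1, h2⟩ | ⟨x', q, hx', hu, h1, h2⟩ | ⟨p, c, hp, hu, h⟩
    · obtain rfl : x = x' := by injection hx'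
      exact ⟨c, hu⟩
    · obtain rfl : x = x' := by injection hx'
      omega
    · exact absurd hp (by simp)
  have inv_eq : ∀ (x : List (Fin d)) (u : V d), (forcer d ℓ).Adj (Sum.inl x) u →
      x.length = ℓ → ∃ q, u = Sum.inr q := by
    intro x u h hlen
    rcases h with ⟨x', c, hx', hu, h1, h2⟩ | ⟨x', q, hx', hu, h1, h2⟩ | ⟨p, c, hp, hu, h⟩
    · obtain rfl : x = x' := by injection hx'
      omega
    · exact ⟨q, hu⟩
    · exact absurd hp (by simp)
  have inv_inr : ∀ (p : Fin d) (u : V d), (forcer d ℓ).Adj (Sum.inr p) u →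
      ∃ c, u = Sum.inl [c] := by
    intro p u h
    rcases h with ⟨x', c, hx', hu, h1, h2⟩ | ⟨x', q, hx', hu, h1, h2⟩ | ⟨p', c, hp, hu, h⟩
    · exact absurd hx' (by simp)
    · exact absurd hx' (by simp)
    · exact ⟨c, hu⟩
  -- reach the pool, then a level-1 node
  have reach2 : ∀ (n : ℕ) (x : List (Fin d)), Sum.inl x ∈ D'.verts → x.length + n = ℓ →
      ∃ q : Fin d, Sum.inr q ∈ D'.verts := by
    intro n
    induction n with
    | zero =>
      intro x hx hlen
      obtain ⟨u, hu⟩ := hTne _ hx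
      obtain ⟨q, rfl⟩ := inv_eq x u (hTF _ hx u hu) (by omega)
      exact ⟨q, hTvert _ hx _ hu⟩
    | succ n ih =>
      intro x hx hlen
      obtain ⟨u, hu⟩ := hTne _ hx
      obtain ⟨c, rfl⟩ := inv_lt x u (hTF _ hx u hu) (by omega)
      exact ih (c :: x) (hTvert _ hx _ hu) (by simp only [List.length_cons]; omega)
  have reach1 : ∀ q : Fin d, Sum.inr q ∈ D'.verts → ∃ c : Fin d, Sum.inl [c] ∈ D'.verts := by
    intro q hq
    obtain ⟨u, hu⟩ := hTne _ hq
    obtain ⟨c, rfl⟩ := inv_inr q u (hTF _ hq u hu)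
    exact ⟨c, hTvert _ hq _ hu⟩
  have hx1 : ∃ c : Fin d, Sum.inl [c] ∈ D'.verts := by
    obtain ⟨v, hv⟩ := hne
    cases v with
    | inl x =>
      have hx := hvlen x hv
      obtain ⟨q, hq⟩ := reach2 (ℓ - x.length) x hv (by omega)
      exact reach1 q hq
    | inr q => exact reach1 q hv
  obtain ⟨c0, hc0⟩ := hx1
  -- grow a large set of leaves in D'
  have grow : ∀ (n : ℕ) (x : List (Fin d)), Sum.inl x ∈ D'.verts → x.length + n = ℓ →
      ∃ S : Finset (List (Fin d)),
        (∀ y ∈ S, Sum.inl y ∈ D'.verts ∧ y.length = ℓ ∧ x <:+ y) ∧ k ^ n ≤ S.card := by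
    intro n
    induction n with
    | zero =>
      intro x hx hlen
      refine ⟨{x}, ?_, by simp⟩
      intro y hy
      rw [Finset.mem_singleton] at hy
      subst hy
      exact ⟨hx, by omega, List.suffix_rfl⟩
    | succ n ih =>
      intro x hx hlen
      have hxlt : x.length < ℓ := by omega
      set C : Finset (List (Fin d)) :=
        (T (Sum.inl x)).image (Sum.elim id fun _ => ([] : List (Fin d))) with hC
      have hCmem : ∀ y ∈ C, Sum.inl y ∈ T (Sum.inl x) ∧ ∃ c, y = c :: x := by
        intro y hy
        rw [hC, Finset.mem_image] at hy
        obtain ⟨u, hu, hgu⟩ := hy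
        obtain ⟨c, rfl⟩ := inv_lt x u (hTF _ hx u hu) hxlt
        simp only [Sum.elim_inl, id_eq] at hgu
        subst hgu
        exact ⟨hu, c, rfl⟩
      have hCcard : k ≤ C.card := by
        rw [hC, Finset.card_image_of_injOn]
        · exact hTcard _ hx
        · intro u hu u' hu' huu
          obtain ⟨cu, rfl⟩ := inv_lt x u (hTF _ hx u hu) hxlt
          obtain ⟨cu', rfl⟩ := inv_lt x u' (hTF _ hx u' hu') hxlt
          simpa using huu
      have ihC : ∀ y ∈ C, ∃ S : Finset (List (Fin d)),
          (∀ z ∈ S, Sum.inl z ∈ D'.verts ∧ z.length = ℓ ∧ y <:+ z) ∧ k ^ n ≤ S.card := by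
        intro y hy
        obtain ⟨c, hc⟩ := (hCmem y hy).2
        refine ih y (hTvert _ hx _ (hCmem y hy).1) ?_
        subst hc
        simp only [List.length_cons]
        omega
      choose! Sf hSf1 hSf2 using ihC
      refine ⟨C.biUnion Sf, ?_, ?_⟩
      · intro z hz
        rw [Finset.mem_biUnion] at hz
        obtain ⟨y, hy, hzy⟩ := hz
        obtain ⟨h1, h2, h3⟩ := hSf1 y hy z hzy
        obtain ⟨c, rfl⟩ := (hCmem y hy).2
        exact ⟨h1, h2, (List.suffix_cons c x).trans h3⟩
      · rw [Finset.card_biUnion]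
        · calc k ^ (n + 1) = k * k ^ n := by rw [pow_succ, Nat.mul_comm]
            _ ≤ C.card * k ^ n := Nat.mul_le_mul_right _ hCcard
            _ ≤ ∑ y ∈ C, (Sf y).card := by
                have := Finset.card_nsmul_le_sum C (fun y => (Sf y).card) (k ^ n)
                  (fun y hy => hSf2 y hy)
                simpa [smul_eq_mul] using this
        · intro y hy y' hy' hyy
          rw [Function.onFun, Finset.disjoint_left]
          intro z hz hz'
          have p1 := hSf1 y hy z hz
          have p2 := hSf1 y' hy' z hz'
          obtain ⟨cy, hcy⟩ := (hCmem y hy).2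
          obtain ⟨cy', hcy'⟩ := (hCmem y' hy').2
          refine hyy (suffix_eq_of_length p1.2.2 p2.2.2 ?_)
          subst hcy hcy'
          simp
  obtain ⟨S, hS, hScard⟩ := grow (ℓ - 1) [c0] hc0 (by simp only [List.length_singleton]; omega)
  -- each leaf has at least k ≥ b out-neighbours in the pool
  have hQ : ∀ y ∈ S, ∃ Q : Finset (Fin d),
      (∀ q ∈ Q, Sum.inr q ∈ T (Sum.inl y)) ∧ k ≤ Q.card := by
    intro y hy
    obtain ⟨hyv, hylen, -⟩ := hS y hy
    refine ⟨(T (Sum.inl y)).image (Sum.elim (fun _ => (⟨0, hd⟩ : Fin d)) id), ?_, ?_⟩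
    · intro q hq
      rw [Finset.mem_image] at hq
      obtain ⟨u, hu, hgu⟩ := hq
      obtain ⟨q', rfl⟩ := inv_eq y u (hTF _ hyv u hu) hylen
      simp only [Sum.elim_inr, id_eq] at hgu
      subst hgu
      exact hu
    · rw [Finset.card_image_of_injOn]
      · exact hTcard _ hyv
      · intro u hu u' hu' huu
        obtain ⟨qu, rfl⟩ := inv_eq y u (hTF _ hyv u hu) hylen
        obtain ⟨qu', rfl⟩ := inv_eq y u' (hTF _ hyv u' hu') hylen
        simpa using huu
  choose! Q hQ1 hQ2 using hQ
  have hBex : ∀ y ∈ S, ∃ Bv : Finset (Fin d), Bv ⊆ Q y ∧ Bv.card = b := by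
    intro y hy
    exact Finset.exists_subset_card_eq (le_trans (by omega) (hQ2 y hy))
  choose! B hB1 hB2 using hBex
  -- pigeonhole: some b-subset of the pool is chosen by at least a leaves
  have hmaps : ∀ y ∈ S, B y ∈ Finset.powersetCard b (Finset.univ : Finset (Fin d)) := by
    intro y hy
    rw [Finset.mem_powersetCard]
    exact ⟨Finset.subset_univ _, hB2 y hy⟩
  have hcount : (Finset.powersetCard b (Finset.univ : Finset (Fin d))).card * (a - 1) < S.card := by
    rw [Finset.card_powersetCard, Finset.card_univ, Fintype.card_fin]
    exact lt_of_lt_of_le hineq hScard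
  obtain ⟨Bc, hBcmem, hfib⟩ :=
    Finset.exists_lt_card_fiber_of_mul_lt_card_of_maps_to hmaps hcount
  have hBcCard : Bc.card = b := (Finset.mem_powersetCard.mp hBcmem).2
  set SF := S.filter (fun y => B y = Bc) with hSF
  have hSFcard : a ≤ SF.card := by omega
  obtain ⟨AS, hASsub, hAScard⟩ := Finset.exists_subset_card_eq hSFcard
  have hASS : AS ⊆ S := hASsub.trans (Finset.filter_subset _ _)
  have hASB : ∀ y ∈ AS, B y = Bc := by
    intro y hy
    exact (Finset.mem_filter.mp (hASsub hy)).2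
  -- enumerate the a leaves and b pool elements
  have hcardA : Fintype.card (↥AS) = a := by rw [Fintype.card_coe]; exact hAScard
  have hcardB : Fintype.card (↥Bc) = b := by rw [Fintype.card_coe]; exact hBcCard
  let eA : ↥AS ≃ Fin a := Fintype.equivFinOfCardEq hcardA
  let eB : ↥Bc ≃ Fin b := Fintype.equivFinOfCardEq hcardB
  let f1 : Fin a → List (Fin d) := fun i => (eA.symm i : ↥AS).1
  let f2 : Fin b → Fin d := fun j => (eB.symm j : ↥Bc).1
  have hf1mem : ∀ i, f1 i ∈ AS := fun i => (eA.symm i).2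
  have hf2mem : ∀ j, f2 j ∈ Bc := fun j => (eB.symm j).2
  have hf1inj : Function.Injective f1 := by
    intro i j hij
    have := eA.symm.injective (Subtype.ext hij)
    exact this
  have hf2inj : Function.Injective f2 := by
    intro i j hij
    have := eB.symm.injective (Subtype.ext hij)
    exact this
  -- key adjacency
  have hadj : ∀ (i : Fin a) (j : Fin b), D'.Adj (Sum.inl (f1 i)) (Sum.inr (f2 j)) := by
    intro i j
    have hyS : f1 i ∈ S := hASS (hf1mem i)
    have hmemB : f2 j ∈ B (f1 i) := by
      rw [hASB _ (hf1mem i)]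
      exact hf2mem j
    have hmemQ : f2 j ∈ Q (f1 i) := hB1 _ hyS hmemB
    exact hTadj _ (hS _ hyS).1 _ (hQ1 _ hyS _ hmemQ)
  refine ⟨Sum.elim (fun i => Sum.inl (f1 i)) (fun j => Sum.inr (f2 j)), ?_, ?_, ?_⟩
  · intro w w' hww
    cases w with
    | inl i =>
      cases w' with
      | inl i' =>
        simp only [Sum.elim_inl, Sum.inl.injEq] at hww
        rw [hf1inj hww]
      | inr j => simp at hww
    | inr j =>
      cases w' with
      | inl i => simp at hww
      | inr j' =>
        simp only [Sum.elim_inr, Sum.inr.injEq] at hww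
        rw [hf2inj hww]
  · intro w
    cases w with
    | inl i => exact (hS _ (hASS (hf1mem i))).1
    | inr j =>
      have hy : f1 ⟨0, ha⟩ ∈ S := hASS (hf1mem _)
      exact hTvert _ (hS _ hy).1 _
        (hQ1 _ hy _ (hB1 _ hy (by rw [hASB _ (hf1mem ⟨0, ha⟩)]; exact hf2mem j)))
  · rintro u v ⟨⟨i, rfl⟩, j, rfl⟩
    simpa using hadj i j

end NotAvoidAux

/-- No one-directed complete bipartite graph is avoidable. -/
theorem oneDirected_complete_bipartite_not_avoidable :
    ∀ a b : ℕ, 1 ≤ a → 1 ≤ b → ¬ Avoidable (oneDirKbip a b) := by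
  intro a b ha hb
  rintro ⟨dF, hdF⟩
  set k := a + b with hk
  have hk2 : 2 ≤ k := by omega
  set d := max (dF k) 1 with hdd
  have hd1 : 1 ≤ d := le_max_right _ _
  have hdk : dF k ≤ d := le_max_left _ _
  set ℓ := a + d * b + 1 with hℓ
  have hl1 : 1 ≤ ℓ := by omega
  -- the forcing digraph is nonempty
  have hne : (NotAvoidAux.forcer d ℓ).verts.Nonempty := by
    refine ⟨Sum.inr ⟨0, hd1⟩, ?_⟩
    intro x hx
    exact absurd hx (by simp)
  -- it has min out-degree at least dF k
  have hmin : (NotAvoidAux.forcer d ℓ).MinOutDegAtLeast (dF k) := by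
    intro v hv
    cases v with
    | inr q =>
      refine ⟨Finset.univ.image (fun c : Fin d => (Sum.inl [c] : NotAvoidAux.V d)), ?_, ?_⟩
      · intro u hu
        rw [Finset.mem_coe, Finset.mem_image] at hu
        obtain ⟨c, -, rfl⟩ := hu
        exact Or.inr (Or.inr ⟨q, c, rfl, rfl, hl1⟩)
      · rw [Finset.card_image_of_injective _ (fun c c' h => by simpa using h)]
        simpa using hdk
    | inl x =>
      have hx := hv x rfl
      rcases lt_or_eq_of_le hx.2 with hlt | heq
      · refine ⟨Finset.univ.image (fun c : Fin d => (Sum.inl (c :: x) : NotAvoidAux.V d)), ?_, ?_⟩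
        · intro u hu
          rw [Finset.mem_coe, Finset.mem_image] at hu
          obtain ⟨c, -, rfl⟩ := hu
          exact Or.inl ⟨x, c, rfl, rfl, hx.1, hlt⟩
        · rw [Finset.card_image_of_injective _ (fun c c' h => by simpa using h)]
          simpa using hdk
      · refine ⟨Finset.univ.image (fun p : Fin d => (Sum.inr p : NotAvoidAux.V d)), ?_, ?_⟩
        · intro u hu
          rw [Finset.mem_coe, Finset.mem_image] at hu
          obtain ⟨p, -, rfl⟩ := hu
          exact Or.inr (Or.inl ⟨x, p, rfl, rfl, heq, hl1⟩)
        · rw [Finset.card_image_of_injective _ (fun p p' h => by simpa using h)]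
          simpa using hdk
  obtain ⟨D', hsub, hne', hmin', hfree⟩ := hdF (NotAvoidAux.V d) (NotAvoidAux.forcer d ℓ) k hne hmin
  apply hfree
  refine NotAvoidAux.forcer_forces a b d ℓ ha hb hd1 hl1 ?_ D' hsub hne' hmin'
  -- the counting inequality
  have e1 : Nat.choose d b ≤ d ^ b := Nat.choose_le_pow d b
  have e2 : d ^ b ≤ 2 ^ (d * b) := by
    calc d ^ b ≤ (2 ^ d) ^ b := Nat.pow_le_pow_left (Nat.lt_two_pow_self (n := d)).le b
      _ = 2 ^ (d * b) := by rw [← pow_mul]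
  have e3 : a - 1 < 2 ^ a := lt_of_le_of_lt (Nat.sub_le a 1) (Nat.lt_two_pow_self (n := a))
  have hexp : ℓ - 1 = d * b + a := by omega
  have hpos : 0 < 2 ^ (d * b) := Nat.pow_pos (by norm_num)
  calc Nat.choose d b * (a - 1) ≤ 2 ^ (d * b) * (a - 1) :=
        Nat.mul_le_mul_right _ (e1.trans e2)
    _ < 2 ^ (d * b) * 2 ^ a := by exact mul_lt_mul_of_pos_left e3 hpos
    _ = 2 ^ (d * b + a) := by rw [pow_add]
    _ ≤ k ^ (d * b + a) := Nat.pow_le_pow_left hk2 _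
    _ = k ^ (ℓ - 1) := by rw [hexp]
end

section
/- For every even integer ℓ ≥ 4, the anti-directed orientation of the cycle C_ℓ (the orientation in which consecutive edges alternate direction, so every vertex is a source or a sink) is not avoidable. -/
open Digraph'

/-- The anti-directed orientation of the cycle `C_ℓ` (for even `ℓ`): the arcs
alternate direction along the cycle, every even vertex being a source. -/
def antiDirCycle (ℓ : ℕ) : Digraph' (Fin ℓ) where
  verts := Set.univ
  Adj u v := u ≠ v ∧ Even u.val ∧
    (v.val = (u.val + 1) % ℓ ∨ u.val = (v.val + 1) % ℓ)
  ne_of_adj := fun _ _ h => h.1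
  mem_verts_left := fun _ _ _ => Set.mem_univ _
  mem_verts_right := fun _ _ _ => Set.mem_univ _

/-! ### Auxiliary construction: a digraph forcing anti-directed cycles

Given `dF`, set `m := ℓ/2`, `d := dF m + m`, `H := d + m + 5`. The host
digraph has as vertices all lists over `Fin d` of length at most `H`
(paths of a `d`-ary tree of depth `H`, read leaf-to-root); every vertex of
length `< H` points to its `d` extensions `a :: v`, and every "leaf"
(length `= H`) points to each of the `d` "roots" `[s]`.  Its minimum
out-degree is `d`.  In any subdigraph `D'` of minimum out-degree `m`,
every active vertex has at least `m^(H - depth)` active leaves above it,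
and every active leaf must keep `m` arcs into the set of roots.  Since
there are only `2^d` subsets of roots and `2^d * (m-1) < m^(H-1)`, some
`m` distinct leaves keep the *same* `m`-set of roots, producing a copy of
`K_{m,m}` oriented from the leaves — which contains the anti-directed
cycle of length `2m`. -/

private lemma suffix_eq_of_length {γ : Type} {l₁ l₂ w : List γ}
    (h₁ : l₁ <:+ w) (h₂ : l₂ <:+ w) (h : l₁.length = l₂.length) : l₁ = l₂ := by
  obtain ⟨s₁, rfl⟩ := h₁
  obtain ⟨s₂, h₂⟩ := h₂
  exact ((List.append_inj' h₂ h.symm).2).symm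

/-- The host digraph. -/
private def host (d H : ℕ) : Digraph' (List (Fin d)) where
  verts := {l | l.length ≤ H}
  Adj u v := (u.length < H ∧ ∃ a, v = a :: u) ∨
    (1 < H ∧ u.length = H ∧ ∃ s, v = [s])
  ne_of_adj := by
    rintro u v (⟨h, a, rfl⟩ | ⟨h1, h2, s, rfl⟩)
    · intro he
      have := congrArg List.length he
      simp at this
    · intro he
      rw [he] at h2
      simp at h2
      omega
  mem_verts_left := by
    rintro u v (⟨h, a, rfl⟩ | ⟨h1, h2, s, rfl⟩)
    · exact le_of_lt h
    · exact le_of_eq h2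
  mem_verts_right := by
    rintro u v (⟨h, a, rfl⟩ | ⟨h1, h2, s, rfl⟩)
    · simpa [Set.mem_setOf_eq] using h
    · simp only [Set.mem_setOf_eq, List.length_cons, List.length_nil]
      omega

private lemma host_minout {d H n : ℕ} (hH : 2 ≤ H) (hn : n ≤ d) :
    (host d H).MinOutDegAtLeast n := by
  intro v hv
  have hv' : v.length ≤ H := hv
  by_cases hl : v.length < H
  · refine ⟨Finset.univ.image (fun a : Fin d => a :: v), ?_, ?_⟩
    · intro x hx
      simp only [Finset.coe_image, Set.mem_image, Finset.mem_coe,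
        Finset.mem_univ, Finset.coe_univ, Set.image_univ, Set.mem_range] at hx
      obtain ⟨a, rfl⟩ := hx
      exact Or.inl ⟨hl, a, rfl⟩
    · rw [Finset.card_image_of_injective _ (fun a b hab => by injection hab)]
      simpa using hn
  · have hlen : v.length = H := le_antisymm hv' (not_lt.1 hl)
    refine ⟨Finset.univ.image (fun s : Fin d => ([s] : List (Fin d))), ?_, ?_⟩
    · intro x hx
      simp only [Finset.coe_image, Finset.coe_univ, Set.image_univ,
        Set.mem_range] at hx
      obtain ⟨s, rfl⟩ := hx
      exact Or.inr ⟨by omega, hlen, s, rfl⟩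
    · rw [Finset.card_image_of_injective _ (fun a b hab => by injection hab)]
      simpa using hn

/-- Growth lemma: any active vertex at depth `H - n` has at least `m ^ n`
active leaves above it. -/
private lemma host_growth {m d H : ℕ} (hm : 1 ≤ m)
    (D' : Digraph' (List (Fin d)))
    (hsub : D'.IsSubdigraph (host d H)) (hdeg : D'.MinOutDegAtLeast m) :
    ∀ n v, v ∈ D'.verts → v.length + n = H →
      ∃ S : Finset (List (Fin d)),
        (∀ w ∈ S, w ∈ D'.verts ∧ w.length = H ∧ v <:+ w) ∧ m ^ n ≤ S.card := by
  intro n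
  induction n with
  | zero =>
    intro v hv hlen
    refine ⟨{v}, ?_, by simp⟩
    intro w hw
    rw [Finset.mem_singleton] at hw
    subst hw
    exact ⟨hv, by omega, List.suffix_rfl⟩
  | succ n ih =>
    intro v hv hlen
    obtain ⟨t, htsub, htcard⟩ := hdeg v hv
    have hchild : ∀ u ∈ t, u ∈ D'.verts ∧ ∃ a, u = a :: v := by
      intro u hu
      have hadj : D'.Adj v u := htsub hu
      have hu' : u ∈ D'.verts := D'.mem_verts_right hadj
      rcases hsub.2 hadj with ⟨_, a, rfl⟩ | ⟨_, hvH, _⟩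
      · exact ⟨hu', a, rfl⟩
      · exfalso; omega
    have hrec : ∀ u ∈ t, ∃ S : Finset (List (Fin d)),
        (∀ w ∈ S, w ∈ D'.verts ∧ w.length = H ∧ u <:+ w) ∧ m ^ n ≤ S.card := by
      intro u hu
      obtain ⟨hu', a, rfl⟩ := hchild u hu
      exact ih (a :: v) hu' (by simp only [List.length_cons]; omega)
    choose! f hf using hrec
    refine ⟨t.biUnion f, ?_, ?_⟩
    · intro w hw
      rw [Finset.mem_biUnion] at hw
      obtain ⟨u, hu, hw⟩ := hw
      obtain ⟨hw1, hw2, hw3⟩ := (hf u hu).1 w hw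
      obtain ⟨_, a, rfl⟩ := hchild u hu
      exact ⟨hw1, hw2, List.IsSuffix.trans ⟨[a], rfl⟩ hw3⟩
    · have hdisj : ∀ u₁ ∈ t, ∀ u₂ ∈ t, u₁ ≠ u₂ → Disjoint (f u₁) (f u₂) := by
        intro u₁ h₁ u₂ h₂ hne
        rw [Finset.disjoint_left]
        intro w hw₁ hw₂
        obtain ⟨_, _, hs₁⟩ := (hf u₁ h₁).1 w hw₁
        obtain ⟨_, _, hs₂⟩ := (hf u₂ h₂).1 w hw₂
        obtain ⟨_, a₁, he₁⟩ := hchild u₁ h₁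
        obtain ⟨_, a₂, he₂⟩ := hchild u₂ h₂
        exact hne (suffix_eq_of_length hs₁ hs₂
          (by rw [he₁, he₂]; simp))
      rw [Finset.card_biUnion hdisj]
      calc m ^ (n + 1) = m ^ n * m := by rw [pow_succ]
        _ ≤ m ^ n * t.card := Nat.mul_le_mul_left _ htcard
        _ = ∑ _u ∈ t, m ^ n := by
              rw [Finset.sum_const, smul_eq_mul, mul_comm]
        _ ≤ ∑ u ∈ t, (f u).card := Finset.sum_le_sum (fun u hu => (hf u hu).2)

/-- Parity of the endpoints of an arc of the anti-directed cycle. -/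
private lemma adj_parity {m : ℕ} (hm : 2 ≤ m) {u v : Fin (m + m)}
    (h : (antiDirCycle (m + m)).Adj u v) :
    u.val % 2 = 0 ∧ v.val % 2 = 1 := by
  obtain ⟨hne, heu, hor⟩ := h
  have hu2 : u.val % 2 = 0 := Nat.even_iff.1 heu
  have hu : u.val < m + m := u.isLt
  have hv : v.val < m + m := v.isLt
  refine ⟨hu2, ?_⟩
  rcases hor with h1 | h1
  · have hlt : u.val + 1 < m + m := by omega
    rw [Nat.mod_eq_of_lt hlt] at h1
    omega
  · by_cases hvm : v.val + 1 < m + m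
    · rw [Nat.mod_eq_of_lt hvm] at h1
      omega
    · have he : v.val + 1 = m + m := by omega
      rw [he, Nat.mod_self] at h1
      omega

/-- The forcing lemma: every subdigraph of the host with min out-degree `m`
contains a copy of the anti-directed cycle of length `2m`. -/
private lemma host_forced {m d H : ℕ} (hm : 2 ≤ m) (hH2 : 2 ≤ H)
    (hcount : 2 ^ d * (m - 1) < m ^ (H - 1))
    (D' : Digraph' (List (Fin d)))
    (hsub : D'.IsSubdigraph (host d H))
    (hne : D'.verts.Nonempty)
    (hdeg : D'.MinOutDegAtLeast m) :
    D'.HasCopy (antiDirCycle (m + m)) := by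
  classical
  -- roots
  set Roots : Finset (List (Fin d)) :=
    Finset.univ.image (fun s : Fin d => ([s] : List (Fin d))) with hRootsDef
  have hRootsCard : Roots.card = d := by
    rw [hRootsDef, Finset.card_image_of_injective _
      (fun a b hab => by injection hab)]
    simp
  have hRootMem : ∀ x ∈ Roots, ∃ s : Fin d, x = [s] := by
    intro x hx
    rw [hRootsDef, Finset.mem_image] at hx
    obtain ⟨s, _, rfl⟩ := hx
    exact ⟨s, rfl⟩
  -- every active leaf keeps an m-set of roots
  have hleaf : ∀ w, w ∈ D'.verts → w.length = H →
      ∃ T : Finset (List (Fin d)), T.card = m ∧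
        (∀ x ∈ T, D'.Adj w x) ∧ T ⊆ Roots := by
    intro w hw hwH
    obtain ⟨t, hts, htc⟩ := hdeg w hw
    obtain ⟨T, hTsub, hTcard⟩ := Finset.exists_subset_card_eq htc
    refine ⟨T, hTcard, ?_, ?_⟩
    · intro x hx
      exact hts (hTsub hx)
    · intro x hx
      have hadj : D'.Adj w x := hts (hTsub hx)
      rcases hsub.2 hadj with ⟨hlt, _⟩ | ⟨_, _, s, rfl⟩
      · exfalso; omega
      · rw [hRootsDef, Finset.mem_image]
        exact ⟨s, Finset.mem_univ s, rfl⟩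
  -- find an active root
  obtain ⟨v₀, hv₀⟩ := hne
  have hv₀len : v₀.length ≤ H := hsub.1 hv₀
  obtain ⟨S₀, hS₀, hS₀card⟩ := host_growth (by omega) D' hsub hdeg
    (H - v₀.length) v₀ hv₀ (by omega)
  have hS₀pos : 0 < S₀.card :=
    lt_of_lt_of_le (Nat.pow_pos (by omega)) hS₀card
  obtain ⟨w₀, hw₀⟩ := Finset.card_pos.1 hS₀pos
  obtain ⟨hw₀v, hw₀len, _⟩ := hS₀ w₀ hw₀
  obtain ⟨T₀, hT₀card, hT₀adj, hT₀R⟩ := hleaf w₀ hw₀v hw₀len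
  have hT₀pos : 0 < T₀.card := by omega
  obtain ⟨x₀, hx₀⟩ := Finset.card_pos.1 hT₀pos
  have hx₀adj : D'.Adj w₀ x₀ := hT₀adj x₀ hx₀
  have hx₀v : x₀ ∈ D'.verts := D'.mem_verts_right hx₀adj
  obtain ⟨s₀, hs₀⟩ := hRootMem x₀ (hT₀R hx₀)
  have hx₀len : x₀.length = 1 := by rw [hs₀]; simp
  -- big family of active leaves
  obtain ⟨S, hS, hScard⟩ := host_growth (by omega) D' hsub hdeg
    (H - 1) x₀ hx₀v (by omega)
  -- the assignment of m-sets of roots to leaves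
  set P : List (Fin d) → Prop := fun w =>
    ∃ T : Finset (List (Fin d)), T.card = m ∧
      (∀ x ∈ T, D'.Adj w x) ∧ T ⊆ Roots with hPdef
  set g : List (Fin d) → Finset (List (Fin d)) :=
    fun w => if h : P w then h.choose else ∅ with hgdef
  have hg : ∀ w ∈ S, (g w).card = m ∧
      (∀ x ∈ g w, D'.Adj w x) ∧ g w ⊆ Roots := by
    intro w hw
    obtain ⟨hwv, hwlen, _⟩ := hS w hw
    have hPw : P w := hleaf w hwv hwlen
    rw [hgdef]
    simp only [dif_pos hPw]
    exact hPw.choose_spec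
  -- pigeonhole
  have hmaps : ∀ w ∈ S, g w ∈ Roots.powerset :=
    fun w hw => Finset.mem_powerset.2 (hg w hw).2.2
  have hcard : Roots.powerset.card * (m - 1) < S.card := by
    rw [Finset.card_powerset, hRootsCard]
    exact lt_of_lt_of_le hcount hScard
  obtain ⟨T, hTmem, hTfib⟩ :=
    Finset.exists_lt_card_fiber_of_mul_lt_card_of_maps_to hmaps hcard
  obtain ⟨U, hUsub, hUcard⟩ :=
    Finset.exists_subset_card_eq (s := S.filter fun w => g w = T) (n := m) (by omega)
  -- properties of U and T
  have hUS : ∀ w ∈ U, w ∈ S ∧ g w = T := by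
    intro w hw
    have := hUsub hw
    rw [Finset.mem_filter] at this
    exact this
  obtain ⟨w₁, hw₁⟩ := Finset.card_pos.1 (show 0 < U.card by omega)
  have hTcard : T.card = m := by
    obtain ⟨hw₁S, hw₁g⟩ := hUS w₁ hw₁
    rw [← hw₁g]; exact (hg w₁ hw₁S).1
  have hTR : T ⊆ Roots := by
    obtain ⟨hw₁S, hw₁g⟩ := hUS w₁ hw₁
    rw [← hw₁g]; exact (hg w₁ hw₁S).2.2
  have hUT : ∀ w ∈ U, ∀ x ∈ T, D'.Adj w x := by
    intro w hw x hx
    obtain ⟨hwS, hwg⟩ := hUS w hw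
    exact (hg w hwS).2.1 x (by rw [hwg]; exact hx)
  have hUverts : ∀ w ∈ U, w ∈ D'.verts ∧ w.length = H := by
    intro w hw
    obtain ⟨hwS, _⟩ := hUS w hw
    exact ⟨(hS w hwS).1, (hS w hwS).2.1⟩
  have hTverts : ∀ x ∈ T, x ∈ D'.verts ∧ x.length = 1 := by
    intro x hx
    refine ⟨D'.mem_verts_right (hUT w₁ hw₁ x hx), ?_⟩
    obtain ⟨s, rfl⟩ := hRootMem x (hTR hx)
    simp
  -- build the copy
  set uL := U.toList with huLdef
  set tL := T.toList with htLdef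
  have huLlen : uL.length = m := by rw [huLdef, Finset.length_toList, hUcard]
  have htLlen : tL.length = m := by rw [htLdef, Finset.length_toList, hTcard]
  have huLnd : uL.Nodup := Finset.nodup_toList U
  have htLnd : tL.Nodup := Finset.nodup_toList T
  have hdiv : ∀ i : Fin (m + m), i.val / 2 < m := by
    intro i
    have := i.isLt
    omega
  set F : Fin (m + m) → List (Fin d) := fun i =>
    if i.val % 2 = 0 then uL.get ⟨i.val / 2, by rw [huLlen]; exact hdiv i⟩
    else tL.get ⟨i.val / 2, by rw [htLlen]; exact hdiv i⟩ with hFdef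
  have hFU : ∀ i : Fin (m + m), i.val % 2 = 0 → F i ∈ U := by
    intro i hi
    rw [hFdef]
    simp only [if_pos hi]
    exact Finset.mem_toList.1 (List.get_mem _ _)
  have hFT : ∀ i : Fin (m + m), i.val % 2 ≠ 0 → F i ∈ T := by
    intro i hi
    rw [hFdef]
    simp only [if_neg hi]
    exact Finset.mem_toList.1 (List.get_mem _ _)
  refine ⟨F, ?_, ?_, ?_⟩
  · -- injectivity
    intro i j hij
    by_cases hi : i.val % 2 = 0 <;> by_cases hj : j.val % 2 = 0
    · rw [hFdef] at hij
      simp only [if_pos hi, if_pos hj] at hij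
      have := (huLnd.get_inj_iff).1 hij
      have h2 : i.val / 2 = j.val / 2 := by
        simpa [Fin.mk.injEq] using this
      exact Fin.ext (by omega)
    · exfalso
      have h1 := (hUverts _ (hFU i hi)).2
      have h2 := (hTverts _ (hFT j hj)).2
      rw [hij, h2] at h1
      omega
    · exfalso
      have h1 := (hUverts _ (hFU j hj)).2
      have h2 := (hTverts _ (hFT i hi)).2
      rw [← hij, h2] at h1
      omega
    · rw [hFdef] at hij
      simp only [if_neg hi, if_neg hj] at hij
      have := (htLnd.get_inj_iff).1 hij
      have h2 : i.val / 2 = j.val / 2 := by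
        simpa [Fin.mk.injEq] using this
      exact Fin.ext (by omega)
  · -- membership
    intro i
    by_cases hi : i.val % 2 = 0
    · exact (hUverts _ (hFU i hi)).1
    · exact (hTverts _ (hFT i hi)).1
  · -- arcs
    intro u v huv
    obtain ⟨hu0, hv1⟩ := adj_parity hm huv
    exact hUT _ (hFU u hu0) _ (hFT v (by omega))

/-- For every even `ℓ ≥ 4`, the anti-directed orientation of `C_ℓ` is not
avoidable. -/
theorem antiDirected_cycle_not_avoidable :
    ∀ ℓ : ℕ, 4 ≤ ℓ → Even ℓ → ¬ Avoidable (antiDirCycle ℓ) := by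
  rintro ℓ hℓ4 ⟨m, rfl⟩ ⟨dF, hdF⟩
  have hm : 2 ≤ m := by omega
  set d := dF m + m with hd
  set H := d + m + 5 with hH
  have hH2 : 2 ≤ H := by omega
  have hcount : 2 ^ d * (m - 1) < m ^ (H - 1) := by
    have h1 : m - 1 < 2 ^ (m + 4) := by
      have h2 := Nat.lt_two_pow_self (n := m)
      have h3 : (2 : ℕ) ^ m ≤ 2 ^ (m + 4) :=
        Nat.pow_le_pow_right (by omega) (by omega)
      omega
    calc 2 ^ d * (m - 1) < 2 ^ d * 2 ^ (m + 4) := by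
          have h4 : (0 : ℕ) < 2 ^ d := Nat.pow_pos (by omega)
          exact mul_lt_mul_of_pos_left h1 h4
      _ = 2 ^ (d + m + 4) := by rw [← pow_add, show d + (m + 4) = d + m + 4 from by omega]
      _ ≤ m ^ (d + m + 4) := Nat.pow_le_pow_left hm _
      _ = m ^ (H - 1) := by rw [show H - 1 = d + m + 4 from by omega]
  obtain ⟨D', hsub, hne', hdeg, hnc⟩ := hdF (List (Fin d)) (host d H) m
    ⟨[], by simp [host]⟩ (host_minout hH2 (by omega))
  exact hnc (host_forced hm hH2 hcount D' hsub hne' hdeg)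
end

section
/- For every digraph D there exists a 3-coloring c : V(D) → {1,2,3} such that every vertex v with at least one out-neighbor has at least a third of its out-neighbors colored differently from v, i.e., |{u ∈ N⁺(v) : c(u) ≠ c(v)}| ≥ d⁺(v)/3. -/
open Digraph'



section MajorityAux

open Matrix

variable {α : Type}

private lemma card_filter_erase [DecidableEq α] (F : Finset α) (v : α) (P : α → Prop)
    [DecidablePred P] :
    (F.filter P).card = ((F.erase v).filter P).card + (if v ∈ F ∧ P v then 1 else 0) := by
  rw [Finset.filter_erase]
  by_cases h : v ∈ F ∧ P v
  · rw [if_pos h]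
    have hv : v ∈ F.filter P := Finset.mem_filter.mpr h
    have hpos : 1 ≤ (F.filter P).card := Finset.card_pos.mpr ⟨v, hv⟩
    rw [Finset.card_erase_of_mem hv]
    omega
  · rw [if_neg h]
    have hv : v ∉ F.filter P := by
      intro hv
      exact h ⟨(Finset.mem_filter.mp hv).1, (Finset.mem_filter.mp hv).2⟩
    rw [Finset.erase_eq_of_notMem hv, add_zero]

private lemma fin3_exists (a : Fin 3) : ∃ b₁ b₂ : Fin 3,
    ({a, b₁, b₂} : Finset (Fin 3)) = Finset.univ ∧ a ≠ b₁ ∧ a ≠ b₂ ∧ b₁ ≠ b₂ := by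
  revert a; decide

private lemma sum_fin3 {β : Type*} [AddCommMonoid β] (g : Fin 3 → β) (a b₁ b₂ : Fin 3)
    (h : ({a, b₁, b₂} : Finset (Fin 3)) = Finset.univ) (h1 : a ≠ b₁) (h2 : a ≠ b₂)
    (h3 : b₁ ≠ b₂) :
    ∑ x : Fin 3, g x = g a + (g b₁ + g b₂) := by
  rw [← h, Finset.sum_insert (by simp [h1, h2]), Finset.sum_insert (by simp [h3]),
    Finset.sum_singleton]

private lemma exists_stationary [DecidableEq α] (M : Finset α) (N : α → Finset α)
    (hM : M.Nonempty) (hsub : ∀ v ∈ M, N v ⊆ M) (hne : ∀ v ∈ M, (N v).Nonempty)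
    (hmin : ∀ S : Finset α, S ⊆ M → S.Nonempty → (∀ v ∈ S, N v ⊆ S) → S = M) :
    ∃ y : α → ℝ, (∀ v ∈ M, 0 < y v) ∧
      ∀ v ∈ M, (∑ u ∈ M, if v ∈ N u then y u / ((N u).card : ℝ) else 0) = y v := by
  classical
  haveI : Nonempty {x // x ∈ M} := Finset.nonempty_coe_sort.mpr hM
  set Q : Matrix {x // x ∈ M} {x // x ∈ M} ℝ :=
    fun u w => if (w : α) ∈ N (u : α) then ((N (u : α)).card : ℝ)⁻¹ else 0 with hQ
  have hcardpos : ∀ u : {x // x ∈ M}, (0 : ℝ) < ((N (u : α)).card : ℝ) := fun u => by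
    exact_mod_cast Finset.card_pos.mpr (hne _ u.2)
  have hrow : ∀ u : {x // x ∈ M}, ∑ w : {x // x ∈ M}, Q u w = 1 := by
    intro u
    have e1 : ∑ w : {x // x ∈ M}, Q u w
        = ∑ w ∈ M, (if w ∈ N (u : α) then ((N (u : α)).card : ℝ)⁻¹ else 0) := by
      simp only [hQ]
      exact Finset.sum_coe_sort M (fun w => if w ∈ N (u : α) then ((N (u : α)).card : ℝ)⁻¹ else 0)
    rw [e1, Finset.sum_ite_mem, (Finset.inter_eq_right).mpr (hsub _ u.2), Finset.sum_const,
      nsmul_eq_mul, mul_inv_cancel₀ (ne_of_gt (hcardpos u))]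
  have hQnn : ∀ u w, 0 ≤ Q u w := by
    intro u w
    rw [hQ]
    dsimp only
    split
    · positivity
    · exact le_rfl
  -- det argument
  have h1 : (Q - 1).mulVec (fun _ => (1 : ℝ)) = 0 := by
    funext u
    simp only [Matrix.mulVec, dotProduct, Pi.zero_apply, mul_one, Matrix.sub_apply]
    rw [Finset.sum_sub_distrib, hrow u]
    simp [Matrix.one_apply, Finset.sum_ite_eq]
  have hone_ne : (fun _ : {x // x ∈ M} => (1 : ℝ)) ≠ 0 := by
    intro h
    obtain ⟨u⟩ := (inferInstance : Nonempty {x // x ∈ M})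
    have := congrFun h u
    norm_num at this
  have hdet : (Q - 1).det = 0 := Matrix.exists_mulVec_eq_zero_iff.mp ⟨_, hone_ne, h1⟩
  have hdetT : (Qᵀ - 1).det = 0 := by
    rw [show (Qᵀ - 1 : Matrix _ _ ℝ) = (Q - 1)ᵀ by rw [Matrix.transpose_sub, Matrix.transpose_one],
      Matrix.det_transpose]
    exact hdet
  obtain ⟨x, hx0, hxz⟩ := Matrix.exists_mulVec_eq_zero_iff.mpr hdetT
  have hstat0 : ∀ w : {x // x ∈ M}, ∑ u : {x // x ∈ M}, Q u w * x u = x w := by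
    intro w
    have h2 := congrFun hxz w
    simp only [Matrix.sub_mulVec, Matrix.one_mulVec, Pi.sub_apply, Pi.zero_apply] at h2
    have h3 : (Qᵀ.mulVec x) w = ∑ u : {x // x ∈ M}, Q u w * x u := by
      simp only [Matrix.mulVec, dotProduct, Matrix.transpose_apply]
    rw [h3] at h2
    linarith
  set y0 : {x // x ∈ M} → ℝ := fun w => |x w| with hy0
  have hstep : ∀ w, y0 w ≤ ∑ u : {x // x ∈ M}, Q u w * y0 u := by
    intro w
    calc y0 w = |∑ u : {x // x ∈ M}, Q u w * x u| := by rw [hstat0 w]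
    _ ≤ ∑ u : {x // x ∈ M}, |Q u w * x u| := Finset.abs_sum_le_sum_abs _ _
    _ = ∑ u : {x // x ∈ M}, Q u w * y0 u := by
        refine Finset.sum_congr rfl fun u _ => ?_
        rw [abs_mul, abs_of_nonneg (hQnn u w)]
  have htot : ∑ w : {x // x ∈ M}, (∑ u : {x // x ∈ M}, Q u w * y0 u)
      = ∑ w : {x // x ∈ M}, y0 w := by
    rw [Finset.sum_comm]
    refine Finset.sum_congr rfl fun u _ => ?_
    rw [← Finset.sum_mul, hrow u, one_mul]
  have heq : ∀ w, ∑ u : {x // x ∈ M}, Q u w * y0 u = y0 w := by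
    have hz : ∑ w : {x // x ∈ M}, ((∑ u : {x // x ∈ M}, Q u w * y0 u) - y0 w) = 0 := by
      rw [Finset.sum_sub_distrib, htot, sub_self]
    have hnn : ∀ w ∈ Finset.univ, (0:ℝ) ≤ (∑ u : {x // x ∈ M}, Q u w * y0 u) - y0 w :=
      fun w _ => sub_nonneg.mpr (hstep w)
    intro w
    have := (Finset.sum_eq_zero_iff_of_nonneg hnn).mp hz w (Finset.mem_univ w)
    linarith
  set y : α → ℝ := fun a => if h : a ∈ M then y0 ⟨a, h⟩ else 0 with hy
  have hyM : ∀ (a : α) (h : a ∈ M), y a = y0 ⟨a, h⟩ := fun a h => dif_pos h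
  have hynn : ∀ a, 0 ≤ y a := by
    intro a
    rw [hy]
    dsimp only
    split
    · exact abs_nonneg _
    · exact le_rfl
  have hsum : ∀ v ∈ M, (∑ u ∈ M, if v ∈ N u then y u / ((N u).card : ℝ) else 0) = y v := by
    intro v hv
    have e1 : ∑ u : {x // x ∈ M}, (if v ∈ N (u : α) then y (u:α) / ((N (u:α)).card : ℝ) else 0)
        = ∑ u ∈ M, (if v ∈ N u then y u / ((N u).card : ℝ) else 0) :=
      Finset.sum_coe_sort M (fun u => if v ∈ N u then y u / ((N u).card : ℝ) else 0)
    rw [← e1]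
    have e2 : ∀ u : {x // x ∈ M}, (if v ∈ N (u:α) then y (u:α) / ((N (u:α)).card : ℝ) else 0)
        = Q u ⟨v, hv⟩ * y0 u := by
      intro u
      rw [hQ]
      dsimp only
      by_cases h : v ∈ N (u : α)
      · rw [if_pos h, if_pos h, hyM _ u.2, div_eq_mul_inv, mul_comm]
      · rw [if_neg h, if_neg h, zero_mul]
    rw [Finset.sum_congr rfl (fun u _ => e2 u), heq ⟨v, hv⟩, hyM v hv]
  have hpos_ex : ∃ a ∈ M, 0 < y a := by
    have hxu : ∃ u : {x // x ∈ M}, x u ≠ 0 := by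
      by_contra h
      push_neg at h
      exact hx0 (funext fun u => h u)
    obtain ⟨u, hu⟩ := hxu
    exact ⟨(u : α), u.2, by rw [hyM _ u.2]; exact abs_pos.mpr hu⟩
  set S : Finset α := M.filter (fun a => 0 < y a) with hS
  have hSM : S ⊆ M := Finset.filter_subset _ _
  have hSne : S.Nonempty := by
    obtain ⟨a, ha, hpa⟩ := hpos_ex
    exact ⟨a, Finset.mem_filter.mpr ⟨ha, hpa⟩⟩
  have hSclosed : ∀ v ∈ S, N v ⊆ S := by
    intro v hvS w hw
    obtain ⟨hvM, hvp⟩ := Finset.mem_filter.mp hvS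
    have hwM : w ∈ M := hsub v hvM hw
    refine Finset.mem_filter.mpr ⟨hwM, ?_⟩
    have hterm : (if w ∈ N v then y v / ((N v).card : ℝ) else 0)
        ≤ ∑ u ∈ M, (if w ∈ N u then y u / ((N u).card : ℝ) else 0) := by
      refine Finset.single_le_sum (f := fun u => if w ∈ N u then y u / ((N u).card : ℝ) else 0)
        (fun i _ => ?_) hvM
      split
      · exact div_nonneg (hynn i) (Nat.cast_nonneg _)
      · exact le_rfl
    rw [if_pos hw] at hterm
    have hcpos : (0:ℝ) < ((N v).card : ℝ) := by
      exact_mod_cast Finset.card_pos.mpr (hne v hvM)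
    have hdivpos : 0 < y v / ((N v).card : ℝ) := div_pos hvp hcpos
    have := hsum w hwM
    linarith
  have hSeq : S = M := hmin S hSM hSne hSclosed
  refine ⟨y, ?_, hsum⟩
  intro v hv
  have hvS : v ∈ S := hSeq ▸ hv
  exact (Finset.mem_filter.mp hvS).2

private def extFun [DecidableEq α] (M : Finset α) (f : {x // x ∈ M} → Fin 3) : α → Fin 3 :=
  fun a => if h : a ∈ M then f ⟨a, h⟩ else 0

private lemma good_on_min [DecidableEq α] (M : Finset α) (N : α → Finset α)
    (p : α → Fin 3 → ℕ)
    (hM : M.Nonempty) (hsub : ∀ v ∈ M, N v ⊆ M) (hne : ∀ v ∈ M, (N v).Nonempty)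
    (hself : ∀ v ∈ M, v ∉ N v)
    (hmin : ∀ S : Finset α, S ⊆ M → S.Nonempty → (∀ v ∈ S, N v ⊆ S) → S = M) :
    ∃ c : α → Fin 3, ∀ v ∈ M,
      3 * (((N v).filter (fun u => c u = c v)).card + p v (c v))
        ≤ 2 * ((N v).card + ∑ x : Fin 3, p v x) := by
  classical
  obtain ⟨y, hy, hstat⟩ := exists_stationary M N hM hsub hne hmin
  set ω : α → ℝ := fun u => y u / ((N u).card : ℝ) with hω
  set Φ : (α → Fin 3) → ℝ := fun c => ∑ u ∈ M,
    ω u * (((((N u).filter (fun w => c w = c u)).card : ℕ) : ℝ) + ((p u (c u) : ℕ) : ℝ)) with hΦ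
  haveI : Nonempty ({x // x ∈ M} → Fin 3) := ⟨fun _ => 0⟩
  obtain ⟨f₀, hf₀⟩ := Finite.exists_min (fun f => Φ (extFun M f))
  set c : α → Fin 3 := extFun M f₀ with hc
  have hupdate : ∀ (v : α) (hv : v ∈ M) (b : Fin 3),
      Function.update c v b = extFun M (Function.update f₀ ⟨v, hv⟩ b) := by
    intro v hv b
    funext a
    by_cases haM : a ∈ M
    · by_cases hav : a = v
      · subst hav
        rw [Function.update_self]
        simp only [extFun, dif_pos haM]
        rw [Function.update_apply, if_pos (Subtype.ext rfl)]
      · rw [Function.update_of_ne hav]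
        simp only [hc, extFun, dif_pos haM]
        rw [Function.update_apply, if_neg (fun h => hav (congrArg Subtype.val h))]
    · have hav : a ≠ v := fun h => haM (h ▸ hv)
      rw [Function.update_of_ne hav]
      simp only [hc, extFun, dif_neg haM]
  have hlocal : ∀ (v : α) (hv : v ∈ M) (b : Fin 3), Φ c ≤ Φ (Function.update c v b) := by
    intro v hv b
    rw [hupdate v hv b]
    exact hf₀ _
  refine ⟨c, ?_⟩
  intro v hv
  have hωnn : ∀ u ∈ M, 0 ≤ ω u := fun u hu => div_nonneg (le_of_lt (hy u hu)) (Nat.cast_nonneg _)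
  have hcardpos : (0:ℝ) < ((N v).card : ℝ) := by
    exact_mod_cast Finset.card_pos.mpr (hne v hv)
  have hωpos : 0 < ω v := div_pos (hy v hv) hcardpos
  set T : Fin 3 → ℕ := fun xx => ((N v).filter (fun w => c w = xx)).card with hT
  set A : ℝ := ∑ u ∈ M.erase v,
      ω u * ((((((N u).erase v).filter (fun w => c w = c u)).card : ℕ) : ℝ) + ((p u (c u) : ℕ) : ℝ)) with hA
  set I : Fin 3 → ℝ := fun xx => ∑ u ∈ M.erase v,
      ω u * (if v ∈ N u ∧ xx = c u then (1:ℝ) else 0) with hI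
  have hexp : ∀ b : Fin 3, Φ (Function.update c v b)
      = (A + I b) + ω v * (((T b : ℕ) : ℝ) + ((p v b : ℕ) : ℝ)) := by
    intro b
    rw [hΦ]
    dsimp only
    rw [← Finset.sum_erase_add M _ hv]
    congr 1
    · -- sum over erase = A + I b
      rw [hA, hI, ← Finset.sum_add_distrib]
      refine Finset.sum_congr rfl fun u hu => ?_
      have huv : u ≠ v := Finset.ne_of_mem_erase hu
      have hcu : Function.update c v b u = c u := Function.update_of_ne huv _ _
      rw [hcu]
      have hcardsplit : ((N u).filter (fun w => Function.update c v b w = c u)).card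
          = (((N u).erase v).filter (fun w => c w = c u)).card
            + (if v ∈ N u ∧ b = c u then 1 else 0) := by
        rw [card_filter_erase (N u) v (fun w => Function.update c v b w = c u)]
        congr 1
        · congr 1
          refine Finset.filter_congr fun w hw => ?_
          rw [Function.update_of_ne (Finset.ne_of_mem_erase hw)]
        · simp only [Function.update_self]
      rw [hcardsplit]
      push_cast
      ring
    · -- term at v
      rw [Function.update_self]
      have hfe : ((N v).filter (fun w => Function.update c v b w = b))
          = ((N v).filter (fun w => c w = b)) := by
        refine Finset.filter_congr fun w hw => ?_
        have hwv : w ≠ v := fun h => hself v hv (by rwa [h] at hw)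
        rw [Function.update_of_ne hwv]
      rw [hfe, hT]
  have hkey : ∀ b : Fin 3,
      ω v * (((T (c v) : ℕ) : ℝ) + ((p v (c v) : ℕ) : ℝ)) + I (c v)
        ≤ ω v * (((T b : ℕ) : ℝ) + ((p v b : ℕ) : ℝ)) + I b := by
    intro b
    have h1 := hlocal v hv b
    have h2 : Φ c = (A + I (c v)) + ω v * (((T (c v) : ℕ) : ℝ) + ((p v (c v) : ℕ) : ℝ)) := by
      rw [← hexp (c v), Function.update_eq_self]
    rw [h2, hexp b] at h1
    linarith
  obtain ⟨b₁, b₂, hcov, hab1, hab2, hb12⟩ := fin3_exists (c v)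
  have hTsum : T (c v) + (T b₁ + T b₂) = (N v).card := by
    have hfib := Finset.card_eq_sum_card_fiberwise
      (f := fun w => c w) (s := N v) (t := Finset.univ) (fun x _ => Finset.mem_univ _)
    rw [sum_fin3 (fun xx => ((N v).filter (fun w => c w = xx)).card) (c v) b₁ b₂
      hcov hab1 hab2 hb12] at hfib
    simp only [hT]
    omega
  have hpsum : (∑ x : Fin 3, p v x) = p v (c v) + (p v b₁ + p v b₂) :=
    sum_fin3 _ _ _ _ hcov hab1 hab2 hb12
  have hIsum : I (c v) + (I b₁ + I b₂) = y v := by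
    rw [← sum_fin3 I (c v) b₁ b₂ hcov hab1 hab2 hb12, hI]
    rw [Finset.sum_comm]
    have e : ∀ u ∈ M.erase v,
        (∑ xx : Fin 3, ω u * (if v ∈ N u ∧ xx = c u then (1:ℝ) else 0))
          = (if v ∈ N u then y u / ((N u).card : ℝ) else 0) := by
      intro u hu
      rw [← Finset.mul_sum]
      by_cases h : v ∈ N u
      · rw [if_pos h]
        simp only [h, true_and]
        rw [Finset.sum_ite_eq' Finset.univ (c u) (fun _ => (1:ℝ)), if_pos (Finset.mem_univ _),
          mul_one]
      · rw [if_neg h]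
        simp only [h, false_and, if_false]
        simp
    rw [Finset.sum_congr rfl e]
    have hveq : (if v ∈ N v then y v / ((N v).card : ℝ) else 0) = 0 := by
      rw [if_neg (hself v hv)]
    have hadd := Finset.sum_erase_add M
      (fun u => if v ∈ N u then y u / ((N u).card : ℝ) else 0) hv
    rw [hveq, add_zero] at hadd
    rw [hadd, hstat v hv]
  have hyv : y v = ω v * ((N v).card : ℝ) := by
    rw [hω]
    field_simp
  have hInn : 0 ≤ I (c v) := by
    rw [hI]
    refine Finset.sum_nonneg fun u hu => ?_
    refine mul_nonneg (hωnn u (Finset.mem_of_mem_erase hu)) ?_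
    split
    · norm_num
    · exact le_rfl
  -- final arithmetic
  have hTsum' : ((T (c v) : ℕ) : ℝ) + (((T b₁ : ℕ) : ℝ) + ((T b₂ : ℕ) : ℝ)) = ((N v).card : ℝ) := by
    exact_mod_cast hTsum
  have hpsum' : ((∑ x : Fin 3, p v x : ℕ) : ℝ)
      = ((p v (c v) : ℕ) : ℝ) + (((p v b₁ : ℕ) : ℝ) + ((p v b₂ : ℕ) : ℝ)) := by
    exact_mod_cast hpsum
  have hPnn : (0:ℝ) ≤ ((∑ x : Fin 3, p v x : ℕ) : ℝ) := Nat.cast_nonneg _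
  have hstep1 : ω v * (3 * (((T (c v) : ℕ) : ℝ) + ((p v (c v) : ℕ) : ℝ)))
      ≤ ω v * (2 * (((N v).card : ℝ) + ((∑ x : Fin 3, p v x : ℕ) : ℝ))) := by
    have k1 := hkey b₁
    have k2 := hkey b₂
    have hmul : ω v * ((((T b₁ : ℕ) : ℝ) + ((p v b₁ : ℕ) : ℝ)) + (((T b₂ : ℕ) : ℝ) + ((p v b₂ : ℕ) : ℝ)))
        = ω v * ((((N v).card : ℝ) + ((∑ x : Fin 3, p v x : ℕ) : ℝ))
            - (((T (c v) : ℕ) : ℝ) + ((p v (c v) : ℕ) : ℝ))) := by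
      congr 1
      linarith [hTsum', hpsum']
    have hωP : 0 ≤ ω v * ((∑ x : Fin 3, p v x : ℕ) : ℝ) := mul_nonneg hωpos.le hPnn
    nlinarith [k1, k2, hmul, hIsum, hyv, hInn, hωP]
  have hfinR : 3 * (((T (c v) : ℕ) : ℝ) + ((p v (c v) : ℕ) : ℝ))
      ≤ 2 * (((N v).card : ℝ) + ((∑ x : Fin 3, p v x : ℕ) : ℝ)) :=
    le_of_mul_le_mul_left hstep1 hωpos
  have : 3 * (T (c v) + p v (c v)) ≤ 2 * ((N v).card + ∑ x : Fin 3, p v x) := by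
    exact_mod_cast hfinR
  exact this

private lemma finite_main [DecidableEq α] (n : ℕ) :
    ∀ (s : Finset α) (N : α → Finset α) (p : α → Fin 3 → ℕ),
    s.card ≤ n → (∀ v ∈ s, N v ⊆ s) → (∀ v ∈ s, v ∉ N v) →
    ∃ c : α → Fin 3, ∀ v ∈ s,
      3 * (((N v).filter (fun u => c u = c v)).card + p v (c v))
        ≤ 2 * ((N v).card + ∑ x : Fin 3, p v x) := by
  induction n with
  | zero =>
    intro s N p hcard _ _
    have hs : s = ∅ := Finset.card_eq_zero.mp (Nat.le_zero.mp hcard)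
    exact ⟨fun _ => 0, by simp [hs]⟩
  | succ n ih =>
    intro s N p hcard hsub hself
    rcases s.eq_empty_or_nonempty with hs | hs
    · exact ⟨fun _ => 0, by simp [hs]⟩
    classical
    set Fam : Finset (Finset α) :=
      s.powerset.filter (fun B => B.Nonempty ∧ ∀ v ∈ B, N v ⊆ B) with hFam
    have hsFam : s ∈ Fam :=
      Finset.mem_filter.mpr ⟨Finset.mem_powerset.mpr (subset_refl s), hs, hsub⟩
    obtain ⟨M, hMFam, hMmin⟩ := Finset.exists_min_image Fam Finset.card ⟨s, hsFam⟩
    obtain ⟨hMpow, hMne, hMclosed⟩ := Finset.mem_filter.mp hMFam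
    have hMs : M ⊆ s := Finset.mem_powerset.mp hMpow
    have hmin : ∀ S : Finset α, S ⊆ M → S.Nonempty → (∀ v ∈ S, N v ⊆ S) → S = M := by
      intro S hSM hSne hScl
      have hSFam : S ∈ Fam :=
        Finset.mem_filter.mpr ⟨Finset.mem_powerset.mpr (hSM.trans hMs), hSne, hScl⟩
      exact Finset.eq_of_subset_of_card_le hSM (hMmin S hSFam)
    have hgoodM : ∃ cM : α → Fin 3, ∀ v ∈ M,
        3 * (((N v).filter (fun u => cM u = cM v)).card + p v (cM v))
          ≤ 2 * ((N v).card + ∑ x : Fin 3, p v x) := by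
      by_cases hall : ∀ v ∈ M, (N v).Nonempty
      · exact good_on_min M N p hMne hMclosed hall (fun v hv => hself v (hMs hv)) hmin
      · push_neg at hall
        obtain ⟨w, hwM, hwE⟩ := hall
        have hwE' : N w = ∅ := hwE
        have hMw : ({w} : Finset α) = M := by
          refine hmin {w} (Finset.singleton_subset_iff.mpr hwM) ⟨w, Finset.mem_singleton_self w⟩ ?_
          intro v hv
          rw [Finset.mem_singleton.mp hv, hwE']
          exact Finset.empty_subset _
        obtain ⟨x0, hx0⟩ := Finite.exists_min (p w)
        refine ⟨fun _ => x0, ?_⟩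
        intro v hv
        have hvw : v = w := Finset.mem_singleton.mp (hMw ▸ hv)
        subst hvw
        rw [hwE']
        simp only [Finset.filter_empty, Finset.card_empty, Finset.card_empty, zero_add]
        have h3 : ∑ x : Fin 3, p v x = p v 0 + p v 1 + p v 2 := Fin.sum_univ_three _
        have i0 := hx0 0
        have i1 := hx0 1
        have i2 := hx0 2
        omega
    obtain ⟨cM, hcM⟩ := hgoodM
    set s' : Finset α := s \ M with hs'
    set N' : α → Finset α := fun v => N v \ M with hN'
    set p' : α → Fin 3 → ℕ :=
      fun v x => p v x + ((N v).filter (fun u => u ∈ M ∧ cM u = x)).card with hp'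
    have hcard' : s'.card ≤ n := by
      have h1 : s'.card = s.card - M.card := Finset.card_sdiff_of_subset hMs
      have h2 : 1 ≤ M.card := Finset.card_pos.mpr hMne
      omega
    have hsub' : ∀ v ∈ s', N' v ⊆ s' := by
      intro v hv u hu
      have hu' := Finset.mem_sdiff.mp hu
      exact Finset.mem_sdiff.mpr ⟨hsub v (Finset.mem_sdiff.mp hv).1 hu'.1, hu'.2⟩
    have hself' : ∀ v ∈ s', v ∉ N' v := by
      intro v hv hvN
      exact hself v (Finset.mem_sdiff.mp hv).1 (Finset.mem_sdiff.mp hvN).1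
    obtain ⟨c', hc'⟩ := ih s' N' p' hcard' hsub' hself'
    set c : α → Fin 3 := fun u => if u ∈ M then cM u else c' u with hcc
    refine ⟨c, ?_⟩
    intro v hv
    by_cases hvM : v ∈ M
    · have hcv : c v = cM v := if_pos hvM
      have hfeq : (N v).filter (fun u => c u = c v)
          = (N v).filter (fun u => cM u = cM v) := by
        refine Finset.filter_congr fun u hu => ?_
        have huM : u ∈ M := hMclosed v hvM hu
        rw [hcv, hcc]
        simp only [if_pos huM]
      rw [hfeq, hcv]
      exact hcM v hvM
    · have hvs' : v ∈ s' := Finset.mem_sdiff.mpr ⟨hv, hvM⟩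
      have hcv : c v = c' v := if_neg hvM
      have h := hc' v hvs'
      -- card splitting
      have hsplit : ((N v).filter (fun u => c u = c v)).card
          = ((N' v).filter (fun u => c' u = c' v)).card
            + ((N v).filter (fun u => u ∈ M ∧ cM u = c' v)).card := by
        have hU : (N v \ M) ∪ (N v ∩ M) = N v := Finset.sdiff_union_inter (N v) M
        have hd : Disjoint ((N v \ M).filter (fun u => c u = c v))
            ((N v ∩ M).filter (fun u => c u = c v)) :=
          Finset.disjoint_filter_filter (Finset.disjoint_sdiff_inter (N v) M)
        calc ((N v).filter (fun u => c u = c v)).card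
            = (((N v \ M) ∪ (N v ∩ M)).filter (fun u => c u = c v)).card := by rw [hU]
          _ = (((N v \ M).filter (fun u => c u = c v))
                ∪ ((N v ∩ M).filter (fun u => c u = c v))).card := by
                rw [Finset.filter_union]
          _ = ((N v \ M).filter (fun u => c u = c v)).card
                + ((N v ∩ M).filter (fun u => c u = c v)).card :=
                Finset.card_union_of_disjoint hd
          _ = ((N' v).filter (fun u => c' u = c' v)).card
                + ((N v).filter (fun u => u ∈ M ∧ cM u = c' v)).card := by
                congr 1
                · refine congrArg Finset.card (Finset.filter_congr fun u hu => ?_)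
                  have huM : u ∉ M := (Finset.mem_sdiff.mp hu).2
                  rw [hcv, hcc]
                  simp only [if_neg huM, if_neg hvM]
                · refine congrArg Finset.card ?_
                  ext u
                  simp only [Finset.mem_filter, Finset.mem_inter]
                  constructor
                  · rintro ⟨⟨huN, huM⟩, hcu⟩
                    refine ⟨huN, huM, ?_⟩
                    rw [hcc] at hcu
                    simp only [if_pos huM, if_neg hvM] at hcu
                    exact hcu
                  · rintro ⟨huN, huM, hcu⟩
                    refine ⟨⟨huN, huM⟩, ?_⟩
                    rw [hcc]
                    simp only [if_pos huM, if_neg hvM]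
                    exact hcu
      have hcardsum : (N' v).card + ((N v).filter (fun u => u ∈ M)).card = (N v).card := by
        have : (N v).filter (fun u => u ∈ M) = N v ∩ M := by
          ext u
          simp [Finset.mem_filter, Finset.mem_inter]
        rw [this]
        exact Finset.card_sdiff_add_card_inter (N v) M
      have hpsum' : ∑ x : Fin 3, p' v x
          = (∑ x : Fin 3, p v x) + ((N v).filter (fun u => u ∈ M)).card := by
        rw [hp']
        rw [Finset.sum_add_distrib]
        congr 1
        have hfib := Finset.card_eq_sum_card_fiberwise
          (f := fun u => cM u) (s := (N v).filter (fun u => u ∈ M)) (t := Finset.univ)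
          (fun x _ => Finset.mem_univ _)
        rw [hfib]
        refine (Finset.sum_congr rfl fun x _ => ?_).symm
        congr 1
        rw [Finset.filter_filter]
      have hp'v : p' v (c' v)
          = p v (c' v) + ((N v).filter (fun u => u ∈ M ∧ cM u = c' v)).card := rfl
      rw [hsplit, hcv]
      rw [hp'v] at h
      omega
      -- remains: relate (N v).card + ∑ p with (N' v).card + ∑ p' : done via omega with hcardsum hpsum'?

end MajorityAux

/-- Every digraph admits a 3-colouring of its vertices such that every vertex
with at least one out-neighbour has at least a third of its out-neighbours
coloured differently from itself. -/
theorem majority_three_coloring :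
    ∀ (α : Type) (D : Digraph' α), (∀ v ∈ D.verts, (D.outNbrs v).Finite) →
      ∃ c : α → Fin 3, ∀ v ∈ D.verts, (D.outNbrs v).Nonempty →
        (D.outNbrs v).ncard ≤ 3 * {u | u ∈ D.outNbrs v ∧ c u ≠ c v}.ncard := by
  intro α D hfin
  classical
  have hfin' : ∀ v : α, (D.outNbrs v).Finite := by
    intro v
    by_cases hv : v ∈ D.verts
    · exact hfin v hv
    · have hE : D.outNbrs v = ∅ := by
        ext u
        simp only [Digraph'.outNbrs, Set.mem_setOf_eq, Set.mem_empty_iff_false, iff_false]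
        intro h
        exact hv (D.mem_verts_left h)
      rw [hE]
      exact Set.finite_empty
  set Nf : α → Finset α := fun v => (hfin' v).toFinset with hNf
  have hNfmem : ∀ v u : α, u ∈ Nf v ↔ D.Adj v u := by
    intro v u
    simp [hNf, Set.Finite.mem_toFinset, Digraph'.outNbrs]
  have hNfself : ∀ v, v ∉ Nf v := by
    intro v hv
    exact D.ne_of_adj ((hNfmem v v).mp hv) rfl
  have key : ∀ t : Finset α, ∃ c : α → Fin 3, ∀ v ∈ t,
      3 * ((Nf v).filter (fun u => c u = c v)).card ≤ 2 * (Nf v).card := by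
    intro t
    set s : Finset α := t ∪ t.biUnion Nf with hsdef
    set N : α → Finset α := fun u => if u ∈ t then Nf u else ∅ with hNdef
    have hsub : ∀ v ∈ s, N v ⊆ s := by
      intro v _ u hu
      simp only [hNdef] at hu
      by_cases hvt : v ∈ t
      · rw [if_pos hvt] at hu
        exact Finset.mem_union_right _ (Finset.mem_biUnion.mpr ⟨v, hvt, hu⟩)
      · rw [if_neg hvt] at hu
        exact absurd hu (Finset.notMem_empty u)
    have hself : ∀ v ∈ s, v ∉ N v := by
      intro v _ hv
      simp only [hNdef] at hv
      by_cases hvt : v ∈ t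
      · rw [if_pos hvt] at hv
        exact hNfself v hv
      · rw [if_neg hvt] at hv
        exact absurd hv (Finset.notMem_empty v)
    obtain ⟨c, hc⟩ := finite_main s.card s N (fun _ _ => 0) le_rfl hsub hself
    refine ⟨c, ?_⟩
    intro v hvt
    have hvs : v ∈ s := Finset.mem_union_left _ hvt
    have h := hc v hvs
    simp only [hNdef, if_pos hvt] at h
    simpa using h
  choose C hC using key
  haveI : Filter.NeBot (Filter.atTop : Filter (Finset α)) := Filter.atTop_neBot
  set U : Ultrafilter (Finset α) := Ultrafilter.of Filter.atTop with hU
  have hUat : ∀ ss : Set (Finset α), ss ∈ (Filter.atTop : Filter (Finset α)) → ss ∈ U :=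
    fun ss hss => Ultrafilter.of_le Filter.atTop hss
  have hexU : ∀ v : α, ∃ x : Fin 3, {t : Finset α | C t v = x} ∈ U := by
    intro v
    by_contra hcon
    push_neg at hcon
    have h0 := Ultrafilter.compl_mem_iff_notMem.mpr (hcon 0)
    have h1 := Ultrafilter.compl_mem_iff_notMem.mpr (hcon 1)
    have h2 := Ultrafilter.compl_mem_iff_notMem.mpr (hcon 2)
    obtain ⟨t, ht⟩ :=
      Filter.nonempty_of_mem (Filter.inter_mem h0 (Filter.inter_mem h1 h2))
    obtain ⟨ht0, ht1, ht2⟩ := ht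
    have hall : ∀ z : Fin 3, z = 0 ∨ z = 1 ∨ z = 2 := by decide
    rcases hall (C t v) with h' | h' | h'
    · exact ht0 h'
    · exact ht1 h'
    · exact ht2 h'
  choose c hcol using hexU
  refine ⟨c, ?_⟩
  intro v hv hnon
  set F : Finset α := insert v (Nf v) with hF
  have hmemv : {t : Finset α | ({v} : Finset α) ≤ t} ∈ U := hUat _ (Filter.mem_atTop {v})
  have hagree : (⋂ u ∈ (F : Set α), {t : Finset α | C t u = c u}) ∈ U := by
    have : (⋂ u ∈ (F : Set α), {t : Finset α | C t u = c u}) ∈ (U : Filter (Finset α)) := by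
      rw [Filter.biInter_mem F.finite_toSet]
      intro u _
      exact hcol u
    exact this
  obtain ⟨t, htv, htagree⟩ := Filter.nonempty_of_mem (Filter.inter_mem hmemv hagree)
  have hvt : v ∈ t := Finset.singleton_subset_iff.mp htv
  have hagree' : ∀ u ∈ F, C t u = c u := by
    intro u hu
    have := Set.mem_iInter₂.mp htagree u (by simpa using hu)
    exact this
  have h := hC t v hvt
  have hfilter : (Nf v).filter (fun u => C t u = C t v)
      = (Nf v).filter (fun u => c u = c v) := by
    refine Finset.filter_congr fun u hu => ?_
    rw [hagree' u (Finset.mem_insert_of_mem hu), hagree' v (Finset.mem_insert_self v _)]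
  rw [hfilter] at h
  have e1 : (D.outNbrs v).ncard = (Nf v).card := Set.ncard_eq_toFinset_card _ (hfin' v)
  have e2 : {u | u ∈ D.outNbrs v ∧ c u ≠ c v}.ncard
      = ((Nf v).filter (fun u => ¬ (c u = c v))).card := by
    have hset : {u | u ∈ D.outNbrs v ∧ c u ≠ c v}
        = ↑((Nf v).filter (fun u => ¬ (c u = c v))) := by
      ext u
      simp [hNf, Set.Finite.mem_toFinset, Digraph'.outNbrs]
    rw [hset, Set.ncard_coe_finset]
  have e3 := Finset.card_filter_add_card_filter_not
    (s := Nf v) (p := fun u => c u = c v)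
  rw [e1, e2]
  omega
end

section
/- Let k and ℓ be positive integers with k sufficiently large as a function of ℓ, and let D be a 2k^{ℓ+1}-regular digraph. Then there exists a subdigraph D' of D with minimum out-degree at least k such that the underlying undirected graph of D' contains no cycle of length ℓ. -/
open Digraph'

/-- `D` is a `d`-regular digraph: every vertex has in- and out-degree `d`. -/
def IsRegularDigraph {α : Type} (D : Digraph' α) (d : ℕ) : Prop :=
  ∀ v ∈ D.verts, ((D.outNbrs v).Finite ∧ (D.outNbrs v).ncard = d) ∧
    ((D.inNbrs v).Finite ∧ (D.inNbrs v).ncard = d)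

/-- The underlying undirected graph of `D` contains a cycle of length `n`. -/
def HasUCycle {α : Type} (D : Digraph' α) (n : ℕ) : Prop :=
  3 ≤ n ∧ ∃ f : ℕ → α, (∀ i j, i < n → j < n → f i = f j → i = j) ∧
    (∀ i, i < n → f i ∈ D.verts) ∧
    ∀ i, i < n → (D.Adj (f i) (f ((i + 1) % n)) ∨ D.Adj (f ((i + 1) % n)) (f i))


set_option linter.unusedSectionVars false
set_option linter.unreachableTactic false
set_option linter.unusedTactic false
set_option maxHeartbeats 1000000

namespace RCA

open Finset

attribute [local instance] Classical.propDecidable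

section ProbCore
variable {ι : Type} [Fintype ι] [DecidableEq ι] {δ : ι → Type}
variable (t : ∀ i, Finset (δ i))

def Det (A : Finset (∀ i, δ i)) (P : Finset ι) : Prop :=
  A ⊆ Fintype.piFinset t ∧
    ∀ f g, f ∈ Fintype.piFinset t → g ∈ Fintype.piFinset t →
      (∀ i ∈ P, f i = g i) → f ∈ A → g ∈ A

/-- merge two functions along `P` -/
noncomputable def mergeOn (P : Finset ι) (f g : ∀ i, δ i) : ∀ i, δ i :=
  fun i => if i ∈ P then f i else g i

lemma mergeOn_mem {P : Finset ι} {f g : ∀ i, δ i}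
    (hf : f ∈ Fintype.piFinset t) (hg : g ∈ Fintype.piFinset t) :
    mergeOn P f g ∈ Fintype.piFinset t := by
  rw [Fintype.mem_piFinset] at *
  intro i
  unfold mergeOn
  split <;> [exact hf i; exact hg i]

lemma mergeOn_mergeOn (P : Finset ι) (f g : ∀ i, δ i) :
    mergeOn P (mergeOn P f g) (mergeOn P g f) = f := by
  funext i
  unfold mergeOn
  by_cases h : i ∈ P <;> simp [h]

/-- Independence of events determined by disjoint coordinate sets (cardinal form). -/
lemma det_indep {A B : Finset (∀ i, δ i)} {P Q : Finset ι}
    (hA : Det t A P) (hB : Det t B Q) (hPQ : Disjoint P Q) :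
    (A ∩ B).card * (Fintype.piFinset t).card = A.card * B.card := by
  classical
  obtain ⟨hAsub, hAdet⟩ := hA
  obtain ⟨hBsub, hBdet⟩ := hB
  have key : ((A ∩ B) ×ˢ (Fintype.piFinset t)).card = (A ×ˢ B).card := by
    apply Finset.card_nbij' (i := fun p => (mergeOn P p.1 p.2, mergeOn P p.2 p.1))
      (j := fun p => (mergeOn P p.1 p.2, mergeOn P p.2 p.1))
    · rintro ⟨f, g⟩ hp
      simp only [Finset.mem_coe, Finset.mem_product, Finset.mem_inter] at hp ⊢
      obtain ⟨⟨hfA, hfB⟩, hg⟩ := hp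
      have hfΩ : f ∈ Fintype.piFinset t := hAsub hfA
      constructor
      · -- mergeOn P f g ∈ A
        exact hAdet f _ hfΩ (mergeOn_mem t hfΩ hg) (fun i hi => by simp [mergeOn, hi]) hfA
      · -- mergeOn P g f ∈ B : agrees with f off P ⊇ on Q
        exact hBdet f _ hfΩ (mergeOn_mem t hg hfΩ)
          (fun i hi => by
            have : i ∉ P := fun hiP => (Finset.disjoint_left.mp hPQ) hiP hi
            simp [mergeOn, this]) hfB
    · rintro ⟨f, g⟩ hp
      simp only [Finset.mem_coe, Finset.mem_product, Finset.mem_inter] at hp ⊢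
      obtain ⟨hfA, hgB⟩ := hp
      have hfΩ : f ∈ Fintype.piFinset t := hAsub hfA
      have hgΩ : g ∈ Fintype.piFinset t := hBsub hgB
      refine ⟨⟨?_, ?_⟩, mergeOn_mem t hgΩ hfΩ⟩
      · exact hAdet f _ hfΩ (mergeOn_mem t hfΩ hgΩ) (fun i hi => by simp [mergeOn, hi]) hfA
      · exact hBdet g _ hgΩ (mergeOn_mem t hfΩ hgΩ)
          (fun i hi => by
            have : i ∉ P := fun hiP => (Finset.disjoint_left.mp hPQ) hiP hi
            simp [mergeOn, this]) hgB
    · rintro ⟨f, g⟩ _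
      simp [mergeOn_mergeOn]
    · rintro ⟨f, g⟩ _
      simp [mergeOn_mergeOn]
  calc (A ∩ B).card * (Fintype.piFinset t).card
      = ((A ∩ B) ×ˢ (Fintype.piFinset t)).card := (Finset.card_product _ _).symm
    _ = (A ×ˢ B).card := key
    _ = A.card * B.card := Finset.card_product _ _


lemma det_mono {A : Finset (∀ i, δ i)} {P P' : Finset ι} (h : Det t A P) (hPP : P ⊆ P') :
    Det t A P' :=
  ⟨h.1, fun f g hf hg hagree => h.2 f g hf hg (fun i hi => hagree i (hPP hi))⟩

lemma det_compl {A : Finset (∀ i, δ i)} {P : Finset ι} (h : Det t A P) :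
    Det t (Fintype.piFinset t \ A) P := by
  refine ⟨Finset.sdiff_subset, ?_⟩
  intro f g hf hg hagree hfmem
  rw [Finset.mem_sdiff] at hfmem ⊢
  refine ⟨hg, fun hgA => hfmem.2 ?_⟩
  exact h.2 g f hg hf (fun i hi => (hagree i hi).symm) hgA

lemma det_biUnion {σ : Type} {S : Finset σ} {A : σ → Finset (∀ i, δ i)} {E : σ → Finset ι}
    (h : ∀ s ∈ S, Det t (A s) (E s)) :
    Det t (S.biUnion A) (S.biUnion E) := by
  constructor
  · intro f hf
    rw [Finset.mem_biUnion] at hf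
    obtain ⟨s, hs, hfs⟩ := hf
    exact (h s hs).1 hfs
  · intro f g hf hg hagree hfmem
    rw [Finset.mem_biUnion] at hfmem ⊢
    obtain ⟨s, hs, hfs⟩ := hfmem
    exact ⟨s, hs, (h s hs).2 f g hf hg
      (fun i hi => hagree i (Finset.mem_biUnion.mpr ⟨s, hs, hi⟩)) hfs⟩

/-- Good S = the set of assignments avoiding all events in S. -/
noncomputable def Good {σ : Type} (A : σ → Finset (∀ i, δ i)) (S : Finset σ) :
    Finset (∀ i, δ i) :=
  Fintype.piFinset t \ S.biUnion A

lemma good_subset {σ : Type} {A : σ → Finset (∀ i, δ i)} {S S' : Finset σ} (h : S' ⊆ S) :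
    Good t A S ⊆ Good t A S' :=
  Finset.sdiff_subset_sdiff (le_refl _) (Finset.biUnion_subset_biUnion_of_subset_left _ h)

lemma good_det {σ : Type} {A : σ → Finset (∀ i, δ i)} {E : σ → Finset ι} {S : Finset σ}
    (h : ∀ s ∈ S, Det t (A s) (E s)) :
    Det t (Good t A S) (S.biUnion E) :=
  det_compl t (det_biUnion t h)

lemma good_insert {σ : Type} {A : σ → Finset (∀ i, δ i)} {S : Finset σ} {j : σ} :
    Good t A (insert j S) = Good t A S \ (A j ∩ Good t A S) := by
  ext f
  simp only [Good, Finset.mem_sdiff, Finset.mem_biUnion, Finset.mem_insert, Finset.mem_inter]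
  constructor
  · rintro ⟨hf, hno⟩
    have hnoS : ¬ ∃ s ∈ S, f ∈ A s := fun ⟨s, hs, hfs⟩ => hno ⟨s, Or.inr hs, hfs⟩
    have hnoj : f ∉ A j := fun h => hno ⟨j, Or.inl rfl, h⟩
    exact ⟨⟨hf, hnoS⟩, fun h => hnoj h.1⟩
  · rintro ⟨⟨hf, hno⟩, hnj⟩
    refine ⟨hf, ?_⟩
    rintro ⟨s, hs | hs, hfs⟩
    · exact hnj ⟨hs ▸ hfs, hf, hno⟩
    · exact hno ⟨s, hs, hfs⟩


section LLLsec

variable {σ : Type} (I : Finset σ) (A : σ → Finset (∀ i, δ i)) (E : σ → Finset ι)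

/-- The Lovász Local Lemma (uniform finite product space, counting form). -/
theorem LLL (ht : ∀ i, (t i).Nonempty)
    (hdet : ∀ s ∈ I, Det t (A s) (E s))
    (M : ℕ) (hM1 : 1 ≤ M)
    (hnbr : ∀ s ∈ I, (I.filter fun j => ¬ Disjoint (E j) (E s)).card ≤ M)
    (hp : ∀ s ∈ I, 4 * M * (A s).card ≤ (Fintype.piFinset t).card) :
    ∃ g ∈ Fintype.piFinset t, ∀ s ∈ I, g ∉ A s := by
  classical
  have hNpos : 0 < ((Fintype.piFinset t).card : ℚ) := by
    have : (Fintype.piFinset t).Nonempty := by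
      rw [Fintype.piFinset_nonempty]; exact ht
    exact_mod_cast Finset.card_pos.mpr this
  set μ : Finset (∀ i, δ i) → ℚ := fun B => (B.card : ℚ) / (Fintype.piFinset t).card with hμ
  have μnonneg : ∀ B, 0 ≤ μ B := fun B => div_nonneg (by positivity) hNpos.le
  have μmono : ∀ {B C : Finset (∀ i, δ i)}, B ⊆ C → μ B ≤ μ C := by
    intro B C h
    show (B.card : ℚ) / _ ≤ (C.card : ℚ) / _
    gcongr
    all_goals exact_mod_cast Finset.card_le_card h
  have μsdiff : ∀ {B C : Finset (∀ i, δ i)}, B ⊆ C → μ (C \ B) = μ C - μ B := by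
    intro B C h
    rw [hμ]
    simp only
    rw [Finset.card_sdiff_of_subset h, Nat.cast_sub (Finset.card_le_card h), sub_div]
  have μΩ : μ (Fintype.piFinset t) = 1 := div_self (ne_of_gt hNpos)
  have hMQpos : 0 < (M : ℚ) := by exact_mod_cast hM1
  set x : ℚ := 1 / (2 * M) with hx
  have hxpos : 0 < x := by rw [hx]; positivity
  have hMQ1 : (1:ℚ) ≤ M := by exact_mod_cast hM1
  have hxhalf : x ≤ 1/2 := by
    rw [hx]
    rw [div_le_div_iff₀ (by positivity) (by norm_num)]
    nlinarith [hMQ1]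
  have hpμ : ∀ s ∈ I, μ (A s) ≤ 1 / (4 * M) := by
    intro s hs
    rw [hμ]
    simp only
    rw [div_le_div_iff₀ hNpos (by positivity)]
    have := hp s hs
    have : ((4 * M * (A s).card : ℕ) : ℚ) ≤ ((Fintype.piFinset t).card : ℕ) := by
      exact_mod_cast this
    push_cast at this
    nlinarith [this]
  have hquarter : (1:ℚ) / (4 * M) ≤ x / 2 := by
    have : x / 2 = 1 / (4 * M) := by
      rw [hx, div_div]
      ring_nf
    rw [this]
  have hindep : ∀ (s : σ), s ∈ I → ∀ (R : Finset σ), R ⊆ I →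
      (∀ j ∈ R, Disjoint (E s) (E j)) →
      μ (A s ∩ Good t A R) = μ (A s) * μ (Good t A R) := by
    intro s hs R hRI hdisjR
    have hGdet : Det t (Good t A R) (R.biUnion E) :=
      good_det t (fun j hj => hdet j (hRI hj))
    have hdisj : Disjoint (E s) (R.biUnion E) := by
      rw [Finset.disjoint_biUnion_right]
      exact hdisjR
    have h := det_indep t (hdet s hs) hGdet hdisj
    have h' : (((A s ∩ Good t A R).card : ℚ)) * (Fintype.piFinset t).card
        = (A s).card * (Good t A R).card := by exact_mod_cast h
    have hN : ((Fintype.piFinset t).card : ℚ) ≠ 0 := ne_of_gt hNpos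
    show ((A s ∩ Good t A R).card : ℚ) / _ = _ / _ * (_ / _)
    rw [div_mul_div_comm, ← h', mul_div_mul_right _ _ hN]
  -- main induction
  have main : ∀ n : ℕ, ∀ S : Finset σ, S ⊆ I → S.card ≤ n → ∀ s ∈ I,
      μ (A s ∩ Good t A S) ≤ x * μ (Good t A S) := by
    intro n
    induction n with
    | zero =>
      intro S hSI hcard s hs
      have hSempty : S = ∅ := Finset.card_eq_zero.mp (Nat.le_zero.mp hcard)
      subst hSempty
      have hG : Good t A ∅ = Fintype.piFinset t := by simp [Good]
      rw [hG, Finset.inter_eq_left.mpr (hdet s hs).1, μΩ, mul_one]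
      calc μ (A s) ≤ 1 / (4*M) := hpμ s hs
        _ ≤ x / 2 := hquarter
        _ ≤ x := by linarith [hxpos]
    | succ n IH =>
      intro S hSI hcard s hs
      by_cases hn : S.card ≤ n
      · exact IH S hSI hn s hs
      have hcard' : S.card = n + 1 := le_antisymm hcard (not_le.mp hn)
      set S₁ := S.filter (fun j => ¬ Disjoint (E j) (E s)) with hS₁
      set S₂ := S \ S₁ with hS₂
      have hS₁S : S₁ ⊆ S := Finset.filter_subset _ _
      have hS₂S : S₂ ⊆ S := Finset.sdiff_subset
      have hS₂I : S₂ ⊆ I := hS₂S.trans hSI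
      have hdisj₂ : ∀ j ∈ S₂, Disjoint (E s) (E j) := by
        intro j hj
        rw [hS₂, Finset.mem_sdiff, hS₁, Finset.mem_filter] at hj
        have := hj.2
        push_neg at this
        exact (this hj.1).symm
      -- peeling lemma
      have peel : ∀ R : Finset σ, R ⊆ S₁ →
          μ (Good t A S₂) * (1 - x * R.card) ≤ μ (Good t A (S₂ ∪ R)) := by
        intro R
        induction R using Finset.induction_on with
        | empty =>
          intro _
          simp only [Finset.card_empty, Nat.cast_zero, mul_zero, sub_zero, mul_one,
            Finset.union_empty]
          exact le_rfl
        | @insert j R hjR ihR =>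
          intro hsub
          have hjS₁ : j ∈ S₁ := hsub (Finset.mem_insert_self _ _)
          have hRS₁ : R ⊆ S₁ := (Finset.subset_insert _ _).trans hsub
          have hjS : j ∈ S := hS₁S hjS₁
          have hjI : j ∈ I := hSI hjS
          have hkey : S₂ ∪ insert j R = insert j (S₂ ∪ R) := by
            rw [Finset.union_insert]
          have hjS₂R : (S₂ ∪ R) ⊆ S.erase j := by
            intro a ha
            rw [Finset.mem_erase]
            rcases Finset.mem_union.mp ha with h | h
            · refine ⟨?_, hS₂S h⟩
              rintro rfl
              rw [hS₂, Finset.mem_sdiff] at h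
              exact h.2 hjS₁
            · exact ⟨fun he => hjR (he ▸ h), hS₁S (hRS₁ h)⟩
          have hcardR : (S₂ ∪ R).card ≤ n := by
            calc (S₂ ∪ R).card ≤ (S.erase j).card := Finset.card_le_card hjS₂R
              _ = S.card - 1 := Finset.card_erase_of_mem hjS
              _ = n := by omega
          have hSRI : S₂ ∪ R ⊆ I := Finset.union_subset hS₂I ((hRS₁.trans hS₁S).trans hSI)
          have hmainIH := IH (S₂ ∪ R) hSRI hcardR j hjI
          have hGeq : Good t A (S₂ ∪ insert j R)
              = Good t A (S₂ ∪ R) \ (A j ∩ Good t A (S₂ ∪ R)) := by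
            rw [hkey, good_insert]
          have hμeq : μ (Good t A (S₂ ∪ insert j R))
              = μ (Good t A (S₂ ∪ R)) - μ (A j ∩ Good t A (S₂ ∪ R)) := by
            rw [hGeq, μsdiff Finset.inter_subset_right]
          have hx1 : (0:ℚ) ≤ 1 - x := by linarith [hxhalf]
          have hRbound := ihR hRS₁
          have hcardins : ((insert j R).card : ℚ) = R.card + 1 := by
            rw [Finset.card_insert_of_notMem hjR]
            push_cast
            ring
          have hG2 : 0 ≤ μ (Good t A S₂) := μnonneg _
          calc μ (Good t A S₂) * (1 - x * (insert j R).card)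
              = μ (Good t A S₂) * (1 - x * (R.card + 1)) := by rw [hcardins]
            _ ≤ μ (Good t A S₂) * ((1 - x) * (1 - x * R.card)) := by
                apply mul_le_mul_of_nonneg_left _ hG2
                nlinarith [mul_nonneg (mul_nonneg hxpos.le hxpos.le)
                  (Nat.cast_nonneg (α := ℚ) R.card)]
            _ = (1 - x) * (μ (Good t A S₂) * (1 - x * R.card)) := by ring
            _ ≤ (1 - x) * μ (Good t A (S₂ ∪ R)) := by
                apply mul_le_mul_of_nonneg_left hRbound hx1
            _ ≤ μ (Good t A (S₂ ∪ insert j R)) := by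
                rw [hμeq]
                have hexp : (1 - x) * μ (Good t A (S₂ ∪ R))
                    = μ (Good t A (S₂ ∪ R)) - x * μ (Good t A (S₂ ∪ R)) := by ring
                linarith [hmainIH]
      have hunion : S₂ ∪ S₁ = S := by
        rw [hS₂]
        exact Finset.sdiff_union_of_subset hS₁S
      have hpeelS := peel S₁ (le_refl _)
      rw [hunion] at hpeelS
      have hS₁card : S₁.card ≤ M := by
        have hsub : S₁ ⊆ I.filter (fun j => ¬ Disjoint (E j) (E s)) := by
          rw [hS₁]
          exact Finset.filter_subset_filter _ hSI
        exact le_trans (Finset.card_le_card hsub) (hnbr s hs)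
      have hhalf : (1:ℚ)/2 ≤ 1 - x * S₁.card := by
        have : x * S₁.card ≤ x * M := by
          apply mul_le_mul_of_nonneg_left _ hxpos.le
          exact_mod_cast hS₁card
        have hxM : x * M = 1/2 := by
          rw [hx]
          field_simp
        linarith
      have hGS2 : (1:ℚ)/2 * μ (Good t A S₂) ≤ μ (Good t A S) := by
        calc (1:ℚ)/2 * μ (Good t A S₂) ≤ (1 - x * S₁.card) * μ (Good t A S₂) := by
              apply mul_le_mul_of_nonneg_right hhalf (μnonneg _)
          _ = μ (Good t A S₂) * (1 - x * S₁.card) := by ring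
          _ ≤ μ (Good t A S) := hpeelS
      calc μ (A s ∩ Good t A S) ≤ μ (A s ∩ Good t A S₂) := by
            apply μmono
            exact Finset.inter_subset_inter (le_refl _) (good_subset t hS₂S)
        _ = μ (A s) * μ (Good t A S₂) := hindep s hs S₂ hS₂I hdisj₂
        _ ≤ (1/(4*M)) * μ (Good t A S₂) := by
            apply mul_le_mul_of_nonneg_right (hpμ s hs) (μnonneg _)
        _ ≤ (x/2) * μ (Good t A S₂) := by
            apply mul_le_mul_of_nonneg_right hquarter (μnonneg _)
        _ = x * (1/2 * μ (Good t A S₂)) := by ring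
        _ ≤ x * μ (Good t A S) := by
            apply mul_le_mul_of_nonneg_left hGS2 hxpos.le
  -- positivity of Good I
  have goodpos : ∀ S : Finset σ, S ⊆ I → 0 < μ (Good t A S) := by
    intro S
    induction S using Finset.induction_on with
    | empty =>
      intro _
      have hG : Good t A ∅ = Fintype.piFinset t := by simp [Good]
      rw [hG, μΩ]; norm_num
    | @insert j S hjS ihS =>
      intro hsub
      have hjI : j ∈ I := hsub (Finset.mem_insert_self _ _)
      have hSI' : S ⊆ I := (Finset.subset_insert _ _).trans hsub
      have hmain := main S.card S hSI' (le_refl _) j hjI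
      have hμeq : μ (Good t A (insert j S))
          = μ (Good t A S) - μ (A j ∩ Good t A S) := by
        rw [good_insert, μsdiff Finset.inter_subset_right]
      have hpos := ihS hSI'
      have hx1 : x < 1 := lt_of_le_of_lt hxhalf (by norm_num)
      rw [hμeq]
      nlinarith [hmain, hpos]
  have := goodpos I (le_refl _)
  have hne : (Good t A I).Nonempty := by
    rw [← Finset.card_pos]
    by_contra h
    push_neg at h
    interval_cases h' : (Good t A I).card
    · rw [hμ] at this
      simp only [h'] at this
      norm_num at this
  obtain ⟨g, hg⟩ := hne
  rw [Good, Finset.mem_sdiff] at hg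
  refine ⟨g, hg.1, fun s hsI hgA => hg.2 ?_⟩
  exact Finset.mem_biUnion.mpr ⟨s, hsI, hgA⟩

end LLLsec

end ProbCore

section Hyper
variable {β : Type}

/-- Number of `k`-subsets of `U` containing a fixed `J ⊆ U`. -/
lemma card_filter_superset {U J : Finset β} (hJU : J ⊆ U) (k : ℕ) (hJk : J.card ≤ k) :
    ((U.powersetCard k).filter (fun s => J ⊆ s)).card
      = (U.card - J.card).choose (k - J.card) := by
  classical
  rw [← Finset.card_sdiff_of_subset hJU, ← Finset.card_powersetCard]
  apply Finset.card_nbij' (i := fun s => s \ J) (j := fun s => s ∪ J)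
  · intro s hs
    simp only [Finset.mem_coe] at hs ⊢
    rw [Finset.mem_filter, Finset.mem_powersetCard] at hs
    obtain ⟨⟨hsU, hscard⟩, hJs⟩ := hs
    rw [Finset.mem_powersetCard]
    exact ⟨Finset.sdiff_subset_sdiff hsU (le_refl _),
      by rw [Finset.card_sdiff_of_subset hJs, hscard]⟩
  · intro s hs
    simp only [Finset.mem_coe] at hs ⊢
    rw [Finset.mem_powersetCard] at hs
    obtain ⟨hsU, hscard⟩ := hs
    rw [Finset.mem_filter, Finset.mem_powersetCard]
    have hsU' : s ⊆ U := hsU.trans Finset.sdiff_subset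
    have hdisj : Disjoint s J := by
      refine Finset.disjoint_left.mpr (fun a ha haJ => ?_)
      exact (Finset.mem_sdiff.mp (hsU ha)).2 haJ
    refine ⟨⟨Finset.union_subset hsU' hJU, ?_⟩, Finset.subset_union_right⟩
    rw [Finset.card_union_of_disjoint hdisj, hscard]
    omega
  · intro s hs
    rw [Finset.mem_coe] at hs
    rw [Finset.mem_filter] at hs
    exact Finset.sdiff_union_of_subset hs.2
  · intro s hs
    rw [Finset.mem_coe] at hs
    rw [Finset.mem_powersetCard] at hs
    have hdisj : Disjoint s J := by
      refine Finset.disjoint_left.mpr (fun a ha haJ => ?_)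
      exact (Finset.mem_sdiff.mp (hs.1 ha)).2 haJ
    show (s ∪ J) \ J = s
    rw [Finset.union_sdiff_right, Finset.sdiff_eq_self_of_disjoint hdisj]

/-- hypergeometric-type inequality `C(d-j, k-j)·d^j ≤ C(d,k)·k^j`. -/
lemma choose_hyper (d k j : ℕ) (hjk : j ≤ k) (hkd : k ≤ d) :
    (d - j).choose (k - j) * d ^ j ≤ d.choose k * k ^ j := by
  induction j with
  | zero => simp
  | succ j IH =>
    have hjk' : j ≤ k := Nat.le_of_succ_le hjk
    have IH' := IH hjk'
    have hjd : j < d := lt_of_lt_of_le hjk hkd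
    -- step : C(d-j-1, k-j-1) * d ≤ C(d-j, k-j) * k
    have hid : (d - j) * Nat.choose (d - j - 1) (k - j - 1)
        = Nat.choose (d - j) (k - j) * (k - j) := by
      have h1 : d - j = (d - j - 1) + 1 := by omega
      have h2 : k - j = (k - j - 1) + 1 := by omega
      have hsucc := Nat.add_one_mul_choose_eq (d - j - 1) (k - j - 1)
      rw [h1, h2]
      simp only [Nat.add_sub_cancel]
      simpa [Nat.succ_eq_add_one] using hsucc
    have hstep : Nat.choose (d - j - 1) (k - j - 1) * d * (d - j)
        ≤ Nat.choose (d - j) (k - j) * k * (d - j) := by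
      calc Nat.choose (d - j - 1) (k - j - 1) * d * (d - j)
          = d * ((d - j) * Nat.choose (d - j - 1) (k - j - 1)) := by ring
        _ = d * (Nat.choose (d - j) (k - j) * (k - j)) := by rw [hid]
        _ = Nat.choose (d - j) (k - j) * (d * (k - j)) := by ring
        _ ≤ Nat.choose (d - j) (k - j) * (k * (d - j)) := by
            apply Nat.mul_le_mul_left
            have hd : d - j + j = d := by omega
            have hk2 : k - j + j = k := by omega
            have ha : k - j ≤ d - j := by omega
            calc d * (k - j) = ((d - j) + j) * (k - j) := by rw [hd]
              _ = (d - j) * (k - j) + j * (k - j) := by ring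
              _ ≤ (d - j) * (k - j) + j * (d - j) := by
                  exact Nat.add_le_add_left (Nat.mul_le_mul_left _ ha) _
              _ = ((k - j) + j) * (d - j) := by ring
              _ = k * (d - j) := by rw [hk2]
        _ = Nat.choose (d - j) (k - j) * k * (d - j) := by ring
    have hdjpos : 0 < d - j := by omega
    have hstep' : Nat.choose (d - j - 1) (k - j - 1) * d
        ≤ Nat.choose (d - j) (k - j) * k := Nat.le_of_mul_le_mul_right hstep hdjpos
    calc (d - (j+1)).choose (k - (j+1)) * d ^ (j+1)
        = (Nat.choose (d - j - 1) (k - j - 1) * d) * d ^ j := by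
          have e1 : d - (j+1) = d - j - 1 := by omega
          have e2 : k - (j+1) = k - j - 1 := by omega
          rw [e1, e2, pow_succ]
          ring
      _ ≤ (Nat.choose (d - j) (k - j) * k) * d ^ j := Nat.mul_le_mul_right _ hstep'
      _ = k * (Nat.choose (d - j) (k - j) * d ^ j) := by ring
      _ ≤ k * (d.choose k * k ^ j) := Nat.mul_le_mul_left _ IH'
      _ = d.choose k * k ^ (j+1) := by rw [pow_succ]; ring

/-- main per-coordinate bound, all cases. -/
lemma card_filter_superset_le {U J : Finset β} (hJU : J ⊆ U) (k : ℕ) (hk : k ≤ U.card) :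
    ((U.powersetCard k).filter (fun s => J ⊆ s)).card * U.card ^ J.card
      ≤ U.card.choose k * k ^ J.card := by
  classical
  by_cases hJk : J.card ≤ k
  · rw [card_filter_superset hJU k hJk]
    exact choose_hyper U.card k J.card hJk hk
  · have : ((U.powersetCard k).filter (fun s => J ⊆ s)) = ∅ := by
      rw [Finset.filter_eq_empty_iff]
      intro s hs
      rw [Finset.mem_powersetCard] at hs
      intro hJs
      exact hJk (hs.2 ▸ Finset.card_le_card hJs)
    rw [this]
    simp

end Hyper

section Digraphs
variable {α : Type}

/-- cyclic successor on `Fin n`. -/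
def csucc {n : ℕ} (i : Fin n) : Fin n := ⟨(i.val + 1) % n, Nat.mod_lt _ i.pos⟩

/-- tail of the `i`-th arc of an oriented tuple. -/
def tailv {n : ℕ} (c : (Fin n → α) × (Fin n → Bool)) (i : Fin n) : α :=
  if c.2 i then c.1 i else c.1 (csucc i)

/-- head of the `i`-th arc of an oriented tuple. -/
def headv {n : ℕ} (c : (Fin n → α) × (Fin n → Bool)) (i : Fin n) : α :=
  if c.2 i then c.1 (csucc i) else c.1 i

/-- A valid oriented `n`-tuple in `D`: an injectively embedded cyclic sequence
together with orientations such that all required arcs are present. -/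
def ValidTuple (D : Digraph' α) {n : ℕ} (c : (Fin n → α) × (Fin n → Bool)) : Prop :=
  Function.Injective c.1 ∧ ∀ i : Fin n, D.Adj (tailv c i) (headv c i)

lemma mod_succ_no2 {n a : ℕ} (hn : 3 ≤ n) (ha : a < n)
    (h : ((a + 1) % n + 1) % n = a) : False := by
  rcases Nat.lt_or_ge (a + 1) n with h1 | h1
  · rw [Nat.mod_eq_of_lt h1] at h
    rcases Nat.lt_or_ge (a + 2) n with h2 | h2
    · rw [Nat.mod_eq_of_lt (by omega : a + 1 + 1 < n)] at h
      omega
    · rw [(by omega : a + 1 + 1 = n), Nat.mod_self] at h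
      omega
  · rw [(by omega : a + 1 = n), Nat.mod_self] at h
    rw [Nat.mod_eq_of_lt (by omega : 0 + 1 < n)] at h
    omega

lemma csucc_csucc_ne {n : ℕ} (hn : 3 ≤ n) (i : Fin n) : csucc (csucc i) ≠ i := by
  intro h
  have h3 : ((i.val + 1) % n + 1) % n = i.val := by
    have := congrArg Fin.val h
    simpa [csucc] using this
  exact mod_succ_no2 hn i.isLt h3

lemma csucc_inj {n : ℕ} {i j : Fin n} (h : csucc i = csucc j) : i = j := by
  have h1 : (i.val + 1) % n = (j.val + 1) % n := by
    have := congrArg Fin.val h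
    simpa [csucc] using this
  have hi := i.isLt
  have hj := j.isLt
  refine Fin.ext ?_
  rcases Nat.lt_or_ge (i.val + 1) n with ha | ha <;>
    rcases Nat.lt_or_ge (j.val + 1) n with hb | hb
  · rw [Nat.mod_eq_of_lt ha, Nat.mod_eq_of_lt hb] at h1; omega
  · rw [Nat.mod_eq_of_lt ha, (by omega : j.val + 1 = n), Nat.mod_self] at h1; omega
  · rw [(by omega : i.val + 1 = n), Nat.mod_self, Nat.mod_eq_of_lt hb] at h1; omega
  · omega

/-- the ordered pair (tail, head) of the i-th arc. -/
def arcPair {n : ℕ} (c : (Fin n → α) × (Fin n → Bool)) (i : Fin n) : α × α :=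
  (tailv c i, headv c i)

lemma arcPair_injective {D : Digraph' α} {n : ℕ} (hn : 3 ≤ n)
    {c : (Fin n → α) × (Fin n → Bool)} (hc : ValidTuple D c) :
    Function.Injective (arcPair c) := by
  intro i j hij
  obtain ⟨hinj, _⟩ := hc
  cases hi : c.2 i <;> cases hj : c.2 j <;>
    simp only [arcPair, tailv, headv, hi, hj, Bool.false_eq_true, if_true, if_false,
      Prod.mk.injEq, reduceIte] at hij
  -- false false : (x (i+1), x i) = (x (j+1), x j)
  · exact csucc_inj (hinj hij.1)
  -- false true : (x (i+1), x i) = (x j, x (j+1))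
  · have e1 : csucc i = j := hinj hij.1
    have e2 : i = csucc j := hinj hij.2
    rw [e2] at e1
    exact absurd e1 (csucc_csucc_ne hn j)
  -- true false : (x i, x (i+1)) = (x (j+1), x j)
  · have e1 : i = csucc j := hinj hij.1
    have e2 : csucc i = j := hinj hij.2
    rw [e1] at e2
    exact absurd e2 (csucc_csucc_ne hn j)
  -- true true
  · exact hinj hij.1

/-- the set of vertices of a tuple. -/
noncomputable def vertsOf {n : ℕ} (c : (Fin n → α) × (Fin n → Bool)) : Finset α :=
  Finset.image c.1 Finset.univ

lemma tailv_mem_vertsOf {n : ℕ} (c : (Fin n → α) × (Fin n → Bool)) (i : Fin n) :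
    tailv c i ∈ vertsOf c := by
  unfold tailv vertsOf
  split <;> exact Finset.mem_image_of_mem _ (Finset.mem_univ _)

/-- a finset from a set (empty if infinite). -/
noncomputable def finsetOfSet (s : Set α) : Finset α :=
  if h : s.Finite then h.toFinset else ∅

lemma mem_finsetOfSet {s : Set α} (h : s.Finite) {a : α} :
    a ∈ finsetOfSet s ↔ a ∈ s := by
  unfold finsetOfSet
  rw [dif_pos h]
  exact Set.Finite.mem_toFinset h

/-- the underlying-neighbourhood finset. -/
noncomputable def nbrF (D : Digraph' α) (v : α) : Finset α :=
  finsetOfSet (D.outNbrs v) ∪ finsetOfSet (D.inNbrs v)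

/-- walks of length n from v (with respect to a neighbour function). -/
noncomputable def walksF (nf : α → Finset α) : ℕ → α → Finset (List α)
  | 0, v => {[v]}
  | (n+1), v => (nf v).biUnion (fun u => (walksF nf n u).image (List.cons v))

lemma card_walksF (nf : α → Finset α) (B : ℕ) (hB : ∀ v, (nf v).card ≤ B) :
    ∀ (n : ℕ) (v : α), (walksF nf n v).card ≤ B ^ n := by
  intro n
  induction n with
  | zero => intro v; simp [walksF]
  | succ n IH =>
    intro v
    calc (walksF nf (n+1) v).card
        ≤ ∑ u ∈ nf v, ((walksF nf n u).image (List.cons v)).card :=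
          Finset.card_biUnion_le
      _ ≤ ∑ u ∈ nf v, B ^ n := by
          apply Finset.sum_le_sum
          intro u _
          exact le_trans (Finset.card_image_le) (IH u)
      _ = (nf v).card * B ^ n := by rw [Finset.sum_const, smul_eq_mul]
      _ ≤ B * B ^ n := Nat.mul_le_mul_right _ (hB v)
      _ = B ^ (n+1) := by rw [pow_succ]; ring

lemma mem_walksF_of (nf : α → Finset α) :
    ∀ (n : ℕ) (f : Fin (n+1) → α),
      (∀ i (hi : i + 1 < n + 1), f ⟨i+1, hi⟩ ∈ nf (f ⟨i, Nat.lt_of_succ_lt hi⟩)) →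
      List.ofFn f ∈ walksF nf n (f 0) := by
  intro n
  induction n with
  | zero =>
    intro f _
    simp [walksF, List.ofFn_succ]
  | succ n IH =>
    intro f hstep
    rw [List.ofFn_succ]
    show _ ∈ walksF nf (n+1) (f 0)
    unfold walksF
    rw [Finset.mem_biUnion]
    refine ⟨f 1, hstep 0 (by omega), ?_⟩
    rw [Finset.mem_image]
    refine ⟨List.ofFn (fun i : Fin (n+1) => f i.succ), ?_, rfl⟩
    have h0 : (fun i : Fin (n+1) => f i.succ) 0 = f 1 := by
      congr 1
    rw [← h0]
    apply IH
    intro i hi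
    have e1 : (⟨i+1, hi⟩ : Fin (n+1)).succ = ⟨i+2, by omega⟩ := rfl
    have e2 : (⟨i, Nat.lt_of_succ_lt hi⟩ : Fin (n+1)).succ = ⟨i+1, by omega⟩ := rfl
    rw [e1, e2]
    exact hstep (i+1) (by omega)

lemma csucc_eq_add_one {n : ℕ} [NeZero n] (i : Fin n) : csucc i = i + 1 := by
  apply Fin.ext
  show (i.val + 1) % n = _
  rw [Fin.val_add, Fin.val_one']
  conv_lhs => rw [Nat.add_mod, Nat.mod_eq_of_lt i.isLt]

lemma step_mem_nbrF {D : Digraph' α}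
    (hfin : ∀ v, (D.outNbrs v).Finite ∧ (D.inNbrs v).Finite)
    {n : ℕ} {c : (Fin n → α) × (Fin n → Bool)} (hc : ValidTuple D c) (i : Fin n) :
    c.1 (csucc i) ∈ nbrF D (c.1 i) := by
  obtain ⟨_, hadj⟩ := hc
  have h := hadj i
  unfold tailv headv at h
  unfold nbrF
  rw [Finset.mem_union]
  cases hε : c.2 i
  · rw [hε] at h
    simp only [Bool.false_eq_true, if_false] at h
    right
    rw [mem_finsetOfSet (hfin _).2]
    exact h
  · rw [hε] at h
    simp only [if_true] at h
    left
    rw [mem_finsetOfSet (hfin _).1]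
    exact h

/-- The number of valid tuples through a fixed vertex. -/
lemma card_tuples_through (D : Digraph' α)
    (hfin : ∀ v, (D.outNbrs v).Finite ∧ (D.inNbrs v).Finite)
    {n : ℕ} (hn : 3 ≤ n) (B : ℕ) (hB : ∀ v, (nbrF D v).card ≤ B)
    (I : Finset ((Fin n → α) × (Fin n → Bool)))
    (hI : ∀ c ∈ I, ValidTuple D c) (v : α) :
    (I.filter (fun c => v ∈ vertsOf c)).card ≤ n * B ^ (n-1) * 2 ^ n := by
  classical
  obtain ⟨m, rfl⟩ : ∃ m, n = m + 1 := ⟨n - 1, by omega⟩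
  haveI : NeZero (m+1) := ⟨by omega⟩
  set target : Finset (Fin (m+1) × (List α × (Fin (m+1) → Bool))) :=
    (Finset.univ : Finset (Fin (m+1))) ×ˢ
      ((walksF (nbrF D) m v) ×ˢ (Finset.univ : Finset (Fin (m+1) → Bool))) with htarget
  have hmain : (I.filter (fun c => v ∈ vertsOf c)).card ≤ target.card := by
    apply Finset.card_le_card_of_injOn
      (f := fun c => if h : ∃ p : Fin (m+1), c.1 p = v then
        (h.choose, (List.ofFn (fun t : Fin (m+1) => c.1 (h.choose + t)), c.2))
        else (0, ([], c.2)))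
    · intro c hc
      simp only [Finset.mem_coe] at hc ⊢
      rw [Finset.mem_filter] at hc
      obtain ⟨hcI, hcv⟩ := hc
      rw [vertsOf, Finset.mem_image] at hcv
      obtain ⟨p, _, hp⟩ := hcv
      have hex : ∃ p : Fin (m+1), c.1 p = v := ⟨p, hp⟩
      rw [dif_pos hex]
      rw [htarget, Finset.mem_product]
      refine ⟨Finset.mem_univ _, ?_⟩
      rw [Finset.mem_product]
      refine ⟨?_, Finset.mem_univ _⟩
      -- the rotated walk
      have h0 : (fun t : Fin (m+1) => c.1 (hex.choose + t)) 0 = v := by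
        simp only [add_zero]
        exact hex.choose_spec
      have := mem_walksF_of (nbrF D) m (fun t : Fin (m+1) => c.1 (hex.choose + t)) ?_
      · have h0' : c.1 (hex.choose + 0) = v := by rw [add_zero]; exact hex.choose_spec
        rw [h0'] at this
        exact this
      · intro t ht
        have e1 : (⟨t, Nat.lt_of_succ_lt ht⟩ : Fin (m+1)) + 1 = ⟨t+1, ht⟩ := by
          apply Fin.ext
          rw [Fin.val_add, Fin.val_one']
          show (t + 1 % (m+1)) % (m+1) = t + 1
          rw [Nat.mod_eq_of_lt (show 1 < m + 1 by omega), Nat.mod_eq_of_lt ht]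
        rw [← e1, ← add_assoc, ← csucc_eq_add_one]
        exact step_mem_nbrF hfin (hI c hcI) _
    · intro c hc c' hc' heq
      simp only [Finset.coe_filter, Set.mem_setOf_eq] at hc hc'
      obtain ⟨hcI, hcv⟩ := hc
      obtain ⟨hc'I, hc'v⟩ := hc'
      rw [vertsOf, Finset.mem_image] at hcv hc'v
      obtain ⟨p, _, hp⟩ := hcv
      obtain ⟨p', _, hp'⟩ := hc'v
      have hex : ∃ q : Fin (m+1), c.1 q = v := ⟨p, hp⟩
      have hex' : ∃ q : Fin (m+1), c'.1 q = v := ⟨p', hp'⟩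
      dsimp only at heq
      rw [dif_pos hex, dif_pos hex'] at heq
      rw [Prod.mk.injEq, Prod.mk.injEq] at heq
      obtain ⟨h1, h2, h3⟩ := heq
      have hfun : (fun t : Fin (m+1) => c.1 (hex.choose + t))
          = (fun t : Fin (m+1) => c'.1 (hex'.choose + t)) := List.ofFn_inj.mp h2
      have hx : c.1 = c'.1 := by
        funext i
        have hstep := congrFun hfun (i - hex'.choose)
        rw [h1] at hstep
        have hcanc : hex'.choose + (i - hex'.choose) = i := by
          have h := sub_add_cancel i hex'.choose
          rw [add_comm (i - hex'.choose)] at h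
          exact h
        rw [hcanc] at hstep
        exact hstep
      exact Prod.ext hx h3
  have hcardt : target.card = (m+1) * ((walksF (nbrF D) m v).card * 2^(m+1)) := by
    rw [htarget, Finset.card_product, Finset.card_product]
    simp [Fintype.card_fun]
  rw [hcardt] at hmain
  calc (I.filter (fun c => v ∈ vertsOf c)).card
      ≤ (m+1) * ((walksF (nbrF D) m v).card * 2^(m+1)) := hmain
    _ ≤ (m+1) * (B^m * 2^(m+1)) := by
        apply Nat.mul_le_mul_left
        apply Nat.mul_le_mul_right
        exact card_walksF (nbrF D) B hB m v
    _ = (m+1) * B^((m+1)-1) * 2^(m+1) := by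
        rw [(by omega : (m+1)-1 = m), mul_assoc]

section Events

variable (D : Digraph' α) (k : ℕ) (T : Finset α)

/-- choice sets: `k`-subsets of the out-neighbourhood. -/
noncomputable def tfun : {a // a ∈ T} → Finset (Finset α) :=
  fun w => (finsetOfSet (D.outNbrs w.val)).powersetCard k

/-- the bad event of a tuple: all its arcs are selected. -/
noncomputable def Ev {n : ℕ} (c : (Fin n → α) × (Fin n → Bool)) :
    Finset ({a // a ∈ T} → Finset α) :=
  (Fintype.piFinset (tfun D k T)).filter
    (fun g => ∀ i : Fin n, ∀ w : {a // a ∈ T}, w.val = tailv c i → headv c i ∈ g w)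

/-- the support of the bad event: the tails of the tuple. -/
noncomputable def Esupp {n : ℕ} (c : (Fin n → α) × (Fin n → Bool)) :
    Finset {a // a ∈ T} :=
  Finset.univ.filter (fun w => ∃ i : Fin n, tailv c i = w.val)

lemma Ev_det {n : ℕ} (c : (Fin n → α) × (Fin n → Bool)) :
    Det (tfun D k T) (Ev D k T c) (Esupp T c) := by
  constructor
  · exact Finset.filter_subset _ _
  · intro f g hf hg hagree hfA
    rw [Ev, Finset.mem_filter] at hfA ⊢
    refine ⟨hg, fun i w hw => ?_⟩
    have hwE : w ∈ Esupp T c := by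
      rw [Esupp, Finset.mem_filter]
      exact ⟨Finset.mem_univ _, ⟨i, hw.symm⟩⟩
    rw [← hagree w hwE]
    exact hfA.2 i w hw

lemma Ev_eq_piFinset {n : ℕ} (c : (Fin n → α) × (Fin n → Bool)) :
    Ev D k T c = Fintype.piFinset (fun w =>
      (tfun D k T w).filter (fun s =>
        (Finset.univ.filter (fun i : Fin n => tailv c i = w.val)).image (headv c) ⊆ s)) := by
  ext g
  simp only [Ev, Finset.mem_filter, Fintype.mem_piFinset]
  constructor
  · rintro ⟨hg, hall⟩
    intro w
    refine ⟨hg w, ?_⟩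
    intro a ha
    rw [Finset.mem_image] at ha
    obtain ⟨i, hi, rfl⟩ := ha
    rw [Finset.mem_filter] at hi
    exact hall i w hi.2.symm
  · intro hall
    constructor
    · intro w
      exact (hall w).1
    · intro i w hw
      apply (hall w).2
      rw [Finset.mem_image]
      exact ⟨i, Finset.mem_filter.mpr ⟨Finset.mem_univ _, hw.symm⟩, rfl⟩

/-- The key probability bound: the event of a valid tuple has density `≤ (k/d)^n`. -/
lemma Ev_card_bound {n : ℕ} (hn : 3 ≤ n) (d : ℕ) (hk : k ≤ d)
    (c : (Fin n → α) × (Fin n → Bool)) (hc : ValidTuple D c)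
    (houtfin : ∀ v, (D.outNbrs v).Finite)
    (houtcard : ∀ w : α, w ∈ T → (finsetOfSet (D.outNbrs w)).card = d)
    (htails : ∀ i : Fin n, tailv c i ∈ T) :
    (Ev D k T c).card * d ^ n ≤ (Fintype.piFinset (tfun D k T)).card * k ^ n := by
  classical
  set J : {a // a ∈ T} → Finset α := fun w =>
    (Finset.univ.filter (fun i : Fin n => tailv c i = w.val)).image (headv c) with hJ
  have hJcard : ∀ w, (J w).card
      = (Finset.univ.filter (fun i : Fin n => tailv c i = w.val)).card := by
    intro w
    rw [hJ]
    apply Finset.card_image_of_injOn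
    intro i hi j hj hij
    rw [Finset.coe_filter, Set.mem_setOf_eq] at hi hj
    apply arcPair_injective hn hc
    rw [arcPair, arcPair, hi.2, hj.2, hij]
  have hJsum : ∑ w : {a // a ∈ T}, (J w).card = n := by
    have h1 := Finset.card_eq_sum_card_fiberwise
      (s := (Finset.univ : Finset (Fin n))) (t := (Finset.univ : Finset {a // a ∈ T}))
      (f := fun i => (⟨tailv c i, htails i⟩ : {a // a ∈ T}))
      (fun i _ => Finset.mem_univ _)
    have h2 : (Finset.univ : Finset (Fin n)).card = n := by simp
    calc ∑ w : {a // a ∈ T}, (J w).card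
        = ∑ w : {a // a ∈ T},
            (Finset.univ.filter
              (fun i : Fin n => (⟨tailv c i, htails i⟩ : {a // a ∈ T}) = w)).card := by
          apply Finset.sum_congr rfl
          intro w _
          rw [hJcard]
          congr 1
          apply Finset.filter_congr
          intro i _
          constructor
          · intro h
            exact Subtype.ext h
          · intro h
            rw [← h]
      _ = n := by rw [← h1, h2]
  have hJsub : ∀ w, J w ⊆ finsetOfSet (D.outNbrs w.val) := by
    intro w a ha
    rw [hJ, Finset.mem_image] at ha
    obtain ⟨i, hi, rfl⟩ := ha
    rw [Finset.mem_filter] at hi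
    rw [mem_finsetOfSet (houtfin _)]
    have := hc.2 i
    rw [← hi.2]
    exact this
  rw [Ev_eq_piFinset, Fintype.card_piFinset, Fintype.card_piFinset]
  calc (∏ w : {a // a ∈ T}, ((tfun D k T w).filter (fun s => J w ⊆ s)).card) * d ^ n
      = ∏ w : {a // a ∈ T},
          (((tfun D k T w).filter (fun s => J w ⊆ s)).card * d ^ (J w).card) := by
        rw [Finset.prod_mul_distrib, Finset.prod_pow_eq_pow_sum, hJsum]
    _ ≤ ∏ w : {a // a ∈ T}, ((tfun D k T w).card * k ^ (J w).card) := by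
        apply Finset.prod_le_prod'
        intro w _
        have hU : (finsetOfSet (D.outNbrs w.val)).card = d := houtcard w.val w.2
        have hb := card_filter_superset_le (hJsub w) k (by rw [hU]; exact hk)
        rw [hU] at hb
        simp only [tfun]
        rw [Finset.card_powersetCard, hU]
        exact hb
    _ = (∏ w : {a // a ∈ T}, (tfun D k T w).card) * k ^ n := by
        rw [Finset.prod_mul_distrib, Finset.prod_pow_eq_pow_sum, hJsum]

/-- The finite LLL instance: a selection avoiding all given valid tuples. -/
lemma finite_selection
    (D : Digraph' α) (ℓ k d : ℕ) (hℓ : 3 ≤ ℓ) (hk1 : 1 ≤ k) (hkd : k ≤ d)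
    (hfin : ∀ v, (D.outNbrs v).Finite ∧ (D.inNbrs v).Finite)
    (houtcard : ∀ v, v ∈ D.verts → (finsetOfSet (D.outNbrs v)).card = d)
    (hB : ∀ v, (nbrF D v).card ≤ 2 * d)
    (hbig : 4 * (ℓ * (ℓ * (2*d)^(ℓ-1) * 2^ℓ)) * k^ℓ ≤ d^ℓ)
    (Tup : Finset ((Fin ℓ → α) × (Fin ℓ → Bool)))
    (hTup : ∀ c ∈ Tup, ValidTuple D c)
    (T : Finset α) (hT : ∀ c ∈ Tup, ∀ i : Fin ℓ, tailv c i ∈ T)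
    (hTverts : ∀ a ∈ T, a ∈ D.verts) :
    ∃ g : {a // a ∈ T} → Finset α, g ∈ Fintype.piFinset (tfun D k T) ∧
      ∀ c ∈ Tup, g ∉ Ev D k T c := by
  classical
  have hd1 : 1 ≤ d := le_trans hk1 hkd
  set M : ℕ := ℓ * (ℓ * (2*d)^(ℓ-1) * 2^ℓ) with hM
  have hM1 : 1 ≤ M := by
    rw [hM]
    have h1 : 0 < (2*d)^(ℓ-1) := Nat.pow_pos (by omega)
    have h2 : 0 < 2^ℓ := Nat.pow_pos (by omega)
    have h3 : 0 < ℓ := by omega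
    exact Nat.one_le_iff_ne_zero.mpr (by positivity)
  have ht : ∀ w : {a // a ∈ T}, (tfun D k T w).Nonempty := by
    intro w
    rw [tfun]
    obtain ⟨s, hs, hcard⟩ := Finset.exists_subset_card_eq
      (le_of_le_of_eq hkd (houtcard w.val (hTverts w.val w.2)).symm)
    exact ⟨s, Finset.mem_powersetCard.mpr ⟨hs, hcard⟩⟩
  have hEsupp_card : ∀ c : (Fin ℓ → α) × (Fin ℓ → Bool), (Esupp T c).card ≤ ℓ := by
    intro c
    have h1 : (Esupp T c).card ≤ ((Finset.univ : Finset (Fin ℓ)).image (tailv c)).card := by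
      apply Finset.card_le_card_of_injOn (fun w => w.val)
      · intro w hw
        simp only [Finset.mem_coe] at hw ⊢
        rw [Esupp, Finset.mem_filter] at hw
        obtain ⟨_, i, hi⟩ := hw
        rw [Finset.mem_image]
        exact ⟨i, Finset.mem_univ _, hi⟩
      · intro a _ b _ hab
        exact Subtype.ext hab
    calc (Esupp T c).card ≤ _ := h1
      _ ≤ (Finset.univ : Finset (Fin ℓ)).card := Finset.card_image_le
      _ = ℓ := by simp
  have hnbr : ∀ c ∈ Tup,
      (Tup.filter fun j => ¬ Disjoint (Esupp T j) (Esupp T c)).card ≤ M := by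
    intro c _
    have hsub : (Tup.filter fun j => ¬ Disjoint (Esupp T j) (Esupp T c))
        ⊆ (Esupp T c).biUnion (fun w => Tup.filter (fun j => w.val ∈ vertsOf j)) := by
      intro j hj
      rw [Finset.mem_filter] at hj
      obtain ⟨hjTup, hnd⟩ := hj
      obtain ⟨w, hw1, hw2⟩ := Finset.not_disjoint_iff.mp hnd
      rw [Finset.mem_biUnion]
      refine ⟨w, hw2, ?_⟩
      rw [Finset.mem_filter]
      refine ⟨hjTup, ?_⟩
      rw [Esupp, Finset.mem_filter] at hw1
      obtain ⟨_, i, hi⟩ := hw1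
      rw [← hi]
      exact tailv_mem_vertsOf j i
    calc (Tup.filter fun j => ¬ Disjoint (Esupp T j) (Esupp T c)).card
        ≤ ((Esupp T c).biUnion (fun w => Tup.filter (fun j => w.val ∈ vertsOf j))).card :=
          Finset.card_le_card hsub
      _ ≤ ∑ w ∈ Esupp T c, (Tup.filter (fun j => w.val ∈ vertsOf j)).card :=
          Finset.card_biUnion_le
      _ ≤ ∑ _w ∈ Esupp T c, (ℓ * (2*d)^(ℓ-1) * 2^ℓ) := by
          apply Finset.sum_le_sum
          intro w _
          exact card_tuples_through D hfin hℓ (2*d) hB Tup hTup w.val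
      _ = (Esupp T c).card * (ℓ * (2*d)^(ℓ-1) * 2^ℓ) := by
          rw [Finset.sum_const, smul_eq_mul]
      _ ≤ ℓ * (ℓ * (2*d)^(ℓ-1) * 2^ℓ) := Nat.mul_le_mul_right _ (hEsupp_card c)
  have hp : ∀ c ∈ Tup, 4 * M * (Ev D k T c).card ≤ (Fintype.piFinset (tfun D k T)).card := by
    intro c hc
    have hEv := Ev_card_bound D k T hℓ d hkd c (hTup c hc)
      (fun v => (hfin v).1) (fun w hw => houtcard w (hTverts w hw)) (hT c hc)
    have hdpos : 0 < d ^ ℓ := Nat.pow_pos (by omega)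
    apply Nat.le_of_mul_le_mul_right _ hdpos
    calc 4 * M * (Ev D k T c).card * d ^ ℓ
        = 4 * M * ((Ev D k T c).card * d ^ ℓ) := by ring
      _ ≤ 4 * M * ((Fintype.piFinset (tfun D k T)).card * k ^ ℓ) :=
          Nat.mul_le_mul_left _ hEv
      _ = (Fintype.piFinset (tfun D k T)).card * (4 * M * k ^ ℓ) := by ring
      _ ≤ (Fintype.piFinset (tfun D k T)).card * d ^ ℓ := by
          apply Nat.mul_le_mul_left
          exact hbig
  obtain ⟨g, hg, hgood⟩ := LLL (tfun D k T) Tup (Ev D k T) (Esupp T) ht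
    (fun c _ => Ev_det D k T c) M hM1 hnbr hp
  exact ⟨g, hg, hgood⟩

end Events

section Compactness

variable (D : Digraph' α)

/-- selected out-neighbours under an arc-assignment. -/
noncomputable def keptArcs (ω : {q : α × α // D.Adj q.1 q.2} → Bool) (v : α) : Finset α :=
  (finsetOfSet (D.outNbrs v)).filter (fun u => ∀ h : D.Adj v u, ω ⟨(v,u),h⟩ = true)

/-- Global selection by compactness: an arc-assignment keeping `k` out-arcs at every
vertex but no complete valid tuple. -/
lemma global_selection (ℓ k d : ℕ) (hℓ : 3 ≤ ℓ) (hk1 : 1 ≤ k) (hkd : k ≤ d)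
    (hfin : ∀ v, (D.outNbrs v).Finite ∧ (D.inNbrs v).Finite)
    (houtcard : ∀ v, v ∈ D.verts → (finsetOfSet (D.outNbrs v)).card = d)
    (hB : ∀ v, (nbrF D v).card ≤ 2 * d)
    (hbig : 4 * (ℓ * (ℓ * (2*d)^(ℓ-1) * 2^ℓ)) * k^ℓ ≤ d^ℓ) :
    ∃ ω : {q : α × α // D.Adj q.1 q.2} → Bool,
      (∀ v, v ∈ D.verts → k ≤ (keptArcs D ω v).card) ∧
      (∀ c : (Fin ℓ → α) × (Fin ℓ → Bool), ∀ hvc : ValidTuple D c,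
        ∃ i : Fin ℓ, ω ⟨(tailv c i, headv c i), hvc.2 i⟩ = false) := by
  classical
  set Z := ({q : α × α // D.Adj q.1 q.2} → Bool) with hZ
  -- the constraint sets
  set Cset : ({c : (Fin ℓ → α) × (Fin ℓ → Bool) // ValidTuple D c} ⊕ {v : α // v ∈ D.verts})
      → Set Z := Sum.elim
    (fun t => {ω : Z | ∃ i : Fin ℓ, ω ⟨(tailv t.val i, headv t.val i), t.2.2 i⟩ = false})
    (fun v => {ω : Z | k ≤ (keptArcs D ω v.val).card}) with hCset
  -- closedness
  have hclosed : ∀ x, IsClosed (Cset x) := by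
    rintro (t | v)
    · have : Cset (Sum.inl t) = ⋃ i : Fin ℓ,
          (fun ω : Z => ω ⟨(tailv t.val i, headv t.val i), t.2.2 i⟩) ⁻¹' {false} := by
        ext ω
        simp [hCset]
      rw [this]
      apply isClosed_iUnion_of_finite
      intro i
      exact IsClosed.preimage (continuous_apply _) isClosed_singleton
    · have : Cset (Sum.inr v) = ⋃ s ∈ (finsetOfSet (D.outNbrs v.val)).powersetCard k,
          ⋂ u ∈ s, ⋂ h : D.Adj v.val u, (fun ω : Z => ω ⟨(v.val, u), h⟩) ⁻¹' {true} := by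
        ext ω
        simp only [hCset, Sum.elim_inr, Set.mem_setOf_eq, Set.mem_iUnion, Set.mem_iInter,
          Set.mem_preimage, Set.mem_singleton_iff]
        constructor
        · intro hk
          obtain ⟨s, hs, hcard⟩ := Finset.exists_subset_card_eq hk
          refine ⟨s, ?_, ?_⟩
          · rw [Finset.mem_powersetCard]
            exact ⟨hs.trans (Finset.filter_subset _ _), hcard⟩
          · intro u hu h
            have := hs hu
            rw [keptArcs, Finset.mem_filter] at this
            exact this.2 h
        · rintro ⟨s, hs, hall⟩
          rw [Finset.mem_powersetCard] at hs
          have hsub : s ⊆ keptArcs D ω v.val := by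
            intro u hu
            rw [keptArcs, Finset.mem_filter]
            exact ⟨hs.1 hu, fun h => hall u hu h⟩
          rw [← hs.2]
          exact Finset.card_le_card hsub
      rw [this]
      apply Set.Finite.isClosed_biUnion (Finset.finite_toSet _)
      intro s _
      apply isClosed_biInter
      intro u _
      apply isClosed_iInter
      intro h
      exact IsClosed.preimage (continuous_apply _) isClosed_singleton
  -- finite intersections are nonempty
  have hfip : ∀ F : Finset ({c : (Fin ℓ → α) × (Fin ℓ → Bool) // ValidTuple D c}
      ⊕ {v : α // v ∈ D.verts}), (⋂ x ∈ F, Cset x).Nonempty := by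
    intro F
    set Tup : Finset ((Fin ℓ → α) × (Fin ℓ → Bool)) :=
      F.biUnion (fun x => Sum.elim (fun t => {t.val}) (fun _ => ∅) x) with hTupdef
    have hTup : ∀ c ∈ Tup, ValidTuple D c := by
      intro c hc
      rw [hTupdef, Finset.mem_biUnion] at hc
      obtain ⟨x, _, hx⟩ := hc
      rcases x with t | v
      · simp only [Sum.elim_inl, Finset.mem_singleton] at hx
        rw [hx]
        exact t.2
      · simp at hx
    set T : Finset α := Tup.biUnion
      (fun c => (Finset.univ : Finset (Fin ℓ)).image (tailv c)) with hTdef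
    have hT : ∀ c ∈ Tup, ∀ i : Fin ℓ, tailv c i ∈ T := by
      intro c hc i
      rw [hTdef, Finset.mem_biUnion]
      exact ⟨c, hc, Finset.mem_image_of_mem _ (Finset.mem_univ _)⟩
    have hTverts : ∀ a ∈ T, a ∈ D.verts := by
      intro a ha
      rw [hTdef, Finset.mem_biUnion] at ha
      obtain ⟨c, hc, ha⟩ := ha
      rw [Finset.mem_image] at ha
      obtain ⟨i, _, rfl⟩ := ha
      exact D.mem_verts_left ((hTup c hc).2 i)
    obtain ⟨g, hgpi, hgood⟩ := finite_selection D ℓ k d hℓ hk1 hkd hfin houtcard hB hbig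
      Tup hTup T hT hTverts
    set ω : Z := fun a =>
      if h : a.val.1 ∈ T then decide (a.val.2 ∈ g ⟨a.val.1, h⟩) else true with hω
    refine ⟨ω, ?_⟩
    rw [Set.mem_iInter₂]
    intro x hxF
    rcases x with t | v
    · -- tuple constraint
      have htT : t.val ∈ Tup := by
        rw [hTupdef, Finset.mem_biUnion]
        exact ⟨Sum.inl t, hxF, by simp⟩
      have := hgood t.val htT
      rw [Ev, Finset.mem_filter] at this
      push_neg at this
      obtain ⟨i, w, hw, hnmem⟩ := this hgpi
      simp only [hCset, Sum.elim_inl, Set.mem_setOf_eq]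
      refine ⟨i, ?_⟩
      rw [hω]
      simp only
      have htail : tailv t.val i ∈ T := by rw [← hw]; exact w.2
      rw [dif_pos htail]
      rw [decide_eq_false_iff_not]
      have hweq : w = ⟨tailv t.val i, htail⟩ := Subtype.ext hw
      rw [← hweq]
      exact hnmem
    · -- degree constraint
      simp only [hCset, Sum.elim_inr, Set.mem_setOf_eq]
      by_cases hv : v.val ∈ T
      · have hgmem := Fintype.mem_piFinset.mp hgpi ⟨v.val, hv⟩
        rw [tfun, Finset.mem_powersetCard] at hgmem
        obtain ⟨hgsub, hgcard⟩ := hgmem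
        have hsub : g ⟨v.val, hv⟩ ⊆ keptArcs D ω v.val := by
          intro u hu
          rw [keptArcs, Finset.mem_filter]
          refine ⟨hgsub hu, fun h => ?_⟩
          rw [hω]
          simp only
          rw [dif_pos hv, decide_eq_true_eq]
          exact hu
        rw [← hgcard]
        exact Finset.card_le_card hsub
      · have : keptArcs D ω v.val = finsetOfSet (D.outNbrs v.val) := by
          rw [keptArcs]
          apply Finset.filter_true_of_mem
          intro u _ h
          rw [hω]
          simp only
          rw [dif_neg hv]
        rw [this, houtcard v.val v.2]
        exact hkd
  -- compactness
  have hZne : Nonempty ({c : (Fin ℓ → α) × (Fin ℓ → Bool) // ValidTuple D c}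
      ⊕ {v : α // v ∈ D.verts}) → True := fun _ => trivial
  have hcompact : ∀ F : Finset _, IsCompact (⋂ x ∈ F, Cset x) := by
    intro F
    apply IsClosed.isCompact
    exact isClosed_biInter (fun x _ => hclosed x)
  have hdir : Directed (fun (s₁ s₂ : Set Z) => s₁ ⊇ s₂)
      (fun F : Finset _ => ⋂ x ∈ F, Cset x) := by
    intro F G
    refine ⟨F ∪ G, ?_, ?_⟩
    · apply Set.biInter_subset_biInter_left
      intro x hx
      exact Finset.mem_union_left _ hx
    · apply Set.biInter_subset_biInter_left
      intro x hx
      exact Finset.mem_union_right _ hx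
  have hmain := IsCompact.nonempty_iInter_of_directed_nonempty_isCompact_isClosed
    (fun F : Finset _ => ⋂ x ∈ F, Cset x) hdir hfip hcompact
    (fun F => isClosed_biInter (fun x _ => hclosed x))
  obtain ⟨ω, hω⟩ := hmain
  rw [Set.mem_iInter] at hω
  have hall : ∀ x, ω ∈ Cset x := by
    intro x
    have := hω {x}
    rw [Set.mem_iInter₂] at this
    exact this x (Finset.mem_singleton_self x)
  refine ⟨ω, ?_, ?_⟩
  · intro v hv
    exact hall (Sum.inr ⟨v, hv⟩)
  · intro c hvc
    exact hall (Sum.inl ⟨c, hvc⟩)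

end Compactness

lemma card_finsetOfSet {s : Set α} (h : s.Finite) : (finsetOfSet s).card = s.ncard := by
  unfold finsetOfSet
  rw [dif_pos h]
  exact (Set.ncard_eq_toFinset_card s h).symm

lemma outNbrs_empty {D : Digraph' α} {v : α} (hv : v ∉ D.verts) : D.outNbrs v = ∅ := by
  ext u
  simp only [Digraph'.outNbrs, Set.mem_setOf_eq, Set.mem_empty_iff_false, iff_false]
  exact fun h => hv (D.mem_verts_left h)

lemma inNbrs_empty {D : Digraph' α} {v : α} (hv : v ∉ D.verts) : D.inNbrs v = ∅ := by
  ext u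
  simp only [Digraph'.inNbrs, Set.mem_setOf_eq, Set.mem_empty_iff_false, iff_false]
  exact fun h => hv (D.mem_verts_right h)

/-- The key arithmetic inequality. -/
lemma key_arith (ℓ k : ℕ) (hℓ : 3 ≤ ℓ) (hk : ℓ^2 * 2^(2*ℓ) ≤ k) :
    4 * (ℓ * (ℓ * (2*(2 * k ^ (ℓ + 1)))^(ℓ-1) * 2^ℓ)) * k^ℓ ≤ (2 * k ^ (ℓ + 1))^ℓ := by
  set d : ℕ := 2 * k ^ (ℓ + 1) with hd
  obtain ⟨e, rfl⟩ : ∃ e, ℓ = e + 1 := ⟨ℓ - 1, by omega⟩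
  have he : e + 1 - 1 = e := by omega
  rw [he]
  have h2d : (2*d)^e = 2^e * d^e := mul_pow 2 d e
  have hde : d^(e+1) = d^e * d := pow_succ d e
  rw [h2d, hde]
  have hstep : 4 * ((e+1) * ((e+1) * (2^e * d^e) * 2^(e+1))) * k^(e+1)
      = (4 * (e+1) * (e+1) * 2^e * 2^(e+1) * k^(e+1)) * d^e := by ring
  rw [hstep]
  rw [mul_comm (d^e) d]
  apply Nat.mul_le_mul_right
  -- goal : 4 * (e+1) * (e+1) * 2^e * 2^(e+1) * k^(e+1) ≤ d
  have hpow : 4 * 2^e * 2^(e+1) = 2 * 2^(2*(e+1)) := by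
    rw [show 2*(e+1) = e + (e+1) + 1 from by ring, pow_add, pow_add]
    ring
  have hexp : 4 * (e+1) * (e+1) * 2^e * 2^(e+1) * k^(e+1)
      = 2 * (((e+1)^2 * 2^(2*(e+1))) * k^(e+1)) := by
    rw [show (2:ℕ) * (((e+1)^2 * 2^(2*(e+1))) * k^(e+1))
        = ((e+1)^2 * (2 * 2^(2*(e+1)))) * k^(e+1) from by ring, ← hpow]
    ring
  rw [hexp, hd]
  have hksucc : k ^ (e + 1 + 1) = k * k ^ (e+1) := by
    rw [pow_succ]
    ring
  rw [hksucc]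
  exact Nat.mul_le_mul_left _ (Nat.mul_le_mul_right _ hk)

end Digraphs

end RCA

open RCA in
/-- For `k` sufficiently large as a function of `ℓ`, every `2k^{ℓ+1}`-regular
digraph contains a subdigraph of minimum out-degree at least `k` whose
underlying undirected graph has no cycle of length `ℓ`. -/
theorem regular_cycle_avoidance :
    ∀ ℓ : ℕ, 1 ≤ ℓ → ∃ k₀ : ℕ, ∀ k : ℕ, k₀ ≤ k →
      ∀ (α : Type) (D : Digraph' α), D.verts.Nonempty →
        IsRegularDigraph D (2 * k ^ (ℓ + 1)) →
        ∃ D' : Digraph' α, D'.IsSubdigraph D ∧ D'.verts.Nonempty ∧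
          D'.MinOutDegAtLeast k ∧ ¬ HasUCycle D' ℓ := by
  classical
  intro ℓ hℓ1
  by_cases hℓ3 : 3 ≤ ℓ
  case neg =>
    refine ⟨1, fun k hk α D hne hreg => ⟨D, ⟨subset_rfl, fun u v h => h⟩, hne, ?_, ?_⟩⟩
    · intro v hv
      refine ⟨finsetOfSet (D.outNbrs v), ?_, ?_⟩
      · intro u hu
        rw [Finset.mem_coe, mem_finsetOfSet ((hreg v hv).1.1)] at hu
        exact hu
      · rw [card_finsetOfSet ((hreg v hv).1.1), (hreg v hv).1.2]
        calc k ≤ k ^ (ℓ+1) := Nat.le_self_pow (by omega) k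
          _ ≤ 2 * k ^ (ℓ+1) := Nat.le_mul_of_pos_left _ (by omega)
    · intro hcyc
      exact hℓ3 hcyc.1
  case pos =>
  refine ⟨ℓ^2 * 2^(2*ℓ) + 1, fun k hk α D hne hreg => ?_⟩
  have hk1 : 1 ≤ k := le_trans (Nat.succ_le_succ (Nat.zero_le _)) hk
  set d : ℕ := 2 * k ^ (ℓ + 1) with hd
  have hkd : k ≤ d := by
    rw [hd]
    calc k ≤ k ^ (ℓ+1) := Nat.le_self_pow (by omega) k
      _ ≤ 2 * k ^ (ℓ+1) := Nat.le_mul_of_pos_left _ (by omega)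
  have hfin : ∀ v, (D.outNbrs v).Finite ∧ (D.inNbrs v).Finite := by
    intro v
    by_cases hv : v ∈ D.verts
    · exact ⟨(hreg v hv).1.1, (hreg v hv).2.1⟩
    · rw [outNbrs_empty hv, inNbrs_empty hv]
      exact ⟨Set.finite_empty, Set.finite_empty⟩
  have houtcard : ∀ v, v ∈ D.verts → (finsetOfSet (D.outNbrs v)).card = d := by
    intro v hv
    rw [card_finsetOfSet (hreg v hv).1.1, (hreg v hv).1.2]
  have hfempty : (finsetOfSet (∅ : Set α)) = ∅ := by
    unfold finsetOfSet
    rw [dif_pos Set.finite_empty]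
    simp
  have hB : ∀ v, (nbrF D v).card ≤ 2 * d := by
    intro v
    by_cases hv : v ∈ D.verts
    · have h1 : (finsetOfSet (D.outNbrs v)).card = d := houtcard v hv
      have h2 : (finsetOfSet (D.inNbrs v)).card = d := by
        rw [card_finsetOfSet (hreg v hv).2.1, (hreg v hv).2.2]
      calc (nbrF D v).card
          ≤ (finsetOfSet (D.outNbrs v)).card + (finsetOfSet (D.inNbrs v)).card :=
            Finset.card_union_le _ _
        _ = 2 * d := by rw [h1, h2]; ring
    · have : nbrF D v = ∅ := by
        rw [nbrF, outNbrs_empty hv, inNbrs_empty hv, hfempty]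
        simp
      rw [this]
      simp
  have hbig : 4 * (ℓ * (ℓ * (2*d)^(ℓ-1) * 2^ℓ)) * k^ℓ ≤ d^ℓ := by
    rw [hd]
    exact key_arith ℓ k hℓ3 (le_trans (Nat.le_succ _) hk)
  obtain ⟨ω, hdeg, htup⟩ := global_selection D ℓ k d hℓ3 hk1 hkd hfin houtcard hB hbig
  set D' : Digraph' α :=
    { verts := D.verts
      Adj := fun u v => ∃ h : D.Adj u v, ω ⟨(u,v), h⟩ = true
      ne_of_adj := by rintro u v ⟨h, _⟩; exact D.ne_of_adj h
      mem_verts_left := by rintro u v ⟨h, _⟩; exact D.mem_verts_left h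
      mem_verts_right := by rintro u v ⟨h, _⟩; exact D.mem_verts_right h } with hD'
  refine ⟨D', ⟨subset_rfl, fun u v h => h.1⟩, hne, ?_, ?_⟩
  · -- min out-degree
    intro v hv
    refine ⟨keptArcs D ω v, ?_, hdeg v hv⟩
    intro u hu
    rw [Finset.mem_coe, keptArcs, Finset.mem_filter] at hu
    obtain ⟨hu1, hu2⟩ := hu
    rw [mem_finsetOfSet (hfin v).1] at hu1
    exact ⟨hu1, hu2 hu1⟩
  · -- no underlying cycle of length ℓ
    rintro ⟨hl3, f, finj, fmem, fadj⟩
    haveI : NeZero ℓ := ⟨by omega⟩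
    set x : Fin ℓ → α := fun i => f i.val with hx
    set ε : Fin ℓ → Bool := fun i =>
      if (∃ h : D.Adj (x i) (x (csucc i)), ω ⟨(x i, x (csucc i)), h⟩ = true)
        then true else false with hε
    have hstep : ∀ i : Fin ℓ, ∃ h : D.Adj (tailv (x, ε) i) (headv (x, ε) i),
        ω ⟨(tailv (x,ε) i, headv (x,ε) i), h⟩ = true := by
      intro i
      have hor := fadj i.val i.isLt
      by_cases hfwd : ∃ h : D.Adj (x i) (x (csucc i)), ω ⟨(x i, x (csucc i)), h⟩ = true
      · have hεi : ε i = true := by rw [hε]; simp only [if_pos hfwd]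
        simp only [tailv, headv, hεi, if_true]
        exact hfwd
      · have hεi : ε i = false := by rw [hε]; simp only [if_neg hfwd]
        have hbwd : ∃ h : D.Adj (x (csucc i)) (x i), ω ⟨(x (csucc i), x i), h⟩ = true := by
          rcases hor with h | h
          · exact absurd h hfwd
          · exact h
        simp only [tailv, headv, hεi, Bool.false_eq_true, if_false]
        exact hbwd
    have hvalid : ValidTuple D (x, ε) := by
      constructor
      · intro i j hij
        have h2 : f i.val = f j.val := hij
        exact Fin.ext (finj i.val j.val i.isLt j.isLt h2)
      · intro i
        obtain ⟨h, _⟩ := hstep i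
        exact h
    obtain ⟨i, hfalse⟩ := htup (x, ε) hvalid
    obtain ⟨h', htrue⟩ := hstep i
    exact absurd (htrue.symm.trans hfalse) (by simp)
end
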